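/- arXiv:2201.02720 — 9 statements merged into one kernel-verified Lean document; each statement's English description precedes it below -/
import Mathlib

section
/- Let M be a real symmetric n×n matrix and u, v distinct indices such that e_u - e_v is an eigenvector of M. Then for all real t, |U(t)_{u,u}| + |U(t)_{u,v}| ≥ 1, where U(t) = exp(itM). -/
open Matrix Complex

/-- The continuous-time quantum walk transition matrix `U(t) = exp(i t M)`. -/
noncomputable def transU {n : ℕ} (M : Matrix (Fin n) (Fin n) ℝ) (t : ℝ) :
    Matrix (Fin n) (Fin n) ℂ :=
  NormedSpace.exp ((Complex.I * (t : ℂ)) • M.map (fun x => (x : ℂ)))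

attribute [local instance] Matrix.linftyOpNormedRing Matrix.linftyOpNormedAlgebra
  Matrix.linftyOpNormedSpace

lemma exp_mulVec_eigen {n : ℕ} (A : Matrix (Fin n) (Fin n) ℂ) (w : Fin n → ℂ) (c : ℂ)
    (h : A *ᵥ w = c • w) :
    NormedSpace.exp A *ᵥ w = NormedSpace.exp c • w := by
  have hpow : ∀ k : ℕ, A ^ k *ᵥ w = c ^ k • w := by
    intro k
    induction k with
    | zero => simp
    | succ k ih =>
        rw [pow_succ, ← mulVec_mulVec, h, mulVec_smul, ih, smul_smul, pow_succ, mul_comm]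
  -- mulVec by w as a continuous linear map in the matrix
  let f : Matrix (Fin n) (Fin n) ℂ →ₗ[ℂ] (Fin n → ℂ) :=
    { toFun := fun B => B *ᵥ w
      map_add' := fun B C => add_mulVec B C w
      map_smul' := fun r B => smul_mulVec r B w }
  let F := LinearMap.toContinuousLinearMap f
  have hF : ∀ B, F B = B *ᵥ w := fun _ => rfl
  have hsum := NormedSpace.expSeries_summable' (𝕂 := ℂ) A
  calc NormedSpace.exp A *ᵥ w = F (∑' k : ℕ, ((Nat.factorial k : ℂ))⁻¹ • A ^ k) := by
        rw [hF, NormedSpace.exp_eq_tsum ℂ]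
    _ = ∑' k : ℕ, ((Nat.factorial k : ℂ))⁻¹ • (A ^ k *ᵥ w) := by
        rw [F.map_tsum hsum]
        refine tsum_congr fun k => ?_
        rw [F.map_smul, hF]
    _ = ∑' k : ℕ, (((Nat.factorial k : ℂ))⁻¹ * c ^ k) • w := by
        refine tsum_congr fun k => ?_
        rw [hpow k, smul_smul]
    _ = (∑' k : ℕ, ((Nat.factorial k : ℂ))⁻¹ * c ^ k) • w := by
        refine Summable.tsum_smul_const ?_ w
        simpa [smul_eq_mul] using NormedSpace.expSeries_summable' (𝕂 := ℂ) c
    _ = NormedSpace.exp c • w := by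
        rw [NormedSpace.exp_eq_tsum ℂ]
        simp [smul_eq_mul]

theorem stmt1 {n : ℕ} (M : Matrix (Fin n) (Fin n) ℝ) (hM : M.IsSymm)
    (u v : Fin n) (huv : u ≠ v) (θ : ℝ)
    (h : M *ᵥ (Pi.single u 1 - Pi.single v 1) = θ • (Pi.single u 1 - Pi.single v 1)) :
    ∀ t : ℝ, 1 ≤ ‖transU M t u u‖ + ‖transU M t u v‖ := by
  intro t
  set d : Fin n → ℝ := Pi.single u 1 - Pi.single v 1 with hd
  set w : Fin n → ℂ := (Pi.single u 1 - Pi.single v 1 : Fin n → ℂ) with hw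
  have hwj : ∀ j, w j = ((d j : ℝ) : ℂ) := by
    intro j
    simp only [hw, hd, Pi.sub_apply, Pi.single_apply]
    split_ifs <;> norm_num
  have hmap : (M.map (fun x => (x : ℂ))) *ᵥ w = (θ : ℂ) • w := by
    funext i
    have h1 := congrFun h i
    simp only [mulVec, dotProduct] at h1 ⊢
    calc ∑ j, (M.map (fun x => (x : ℂ))) i j * w j
        = ∑ j, ((M i j * d j : ℝ) : ℂ) := by
          refine Finset.sum_congr rfl fun j _ => ?_
          rw [hwj j, Matrix.map_apply]; push_cast; ring
      _ = (((∑ j, M i j * d j : ℝ)) : ℂ) := by push_cast; ring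
      _ = ((θ * d i : ℝ) : ℂ) := by rw [h1]; simp
      _ = (θ : ℂ) • w i := by rw [hwj i]; push_cast; simp [smul_eq_mul]
  have hA : ((Complex.I * (t : ℂ)) • M.map (fun x => (x : ℂ))) *ᵥ w
      = (Complex.I * t * θ) • w := by
    rw [smul_mulVec, hmap, smul_smul]
  have hexp := exp_mulVec_eigen _ w _ hA
  have hcoord := congrFun hexp u
  have hwu : w u = 1 := by rw [hwj]; simp [hd, Pi.single_apply, huv]
  have hval : transU M t u u - transU M t u v = NormedSpace.exp (Complex.I * t * θ) := by
    have hsum : (transU M t *ᵥ w) u = transU M t u u - transU M t u v := by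
      simp only [mulVec, dotProduct, hw, Pi.sub_apply, mul_sub, Finset.sum_sub_distrib,
        Pi.single_apply, mul_ite, mul_one, mul_zero]
      simp [Finset.sum_ite_eq']
    rw [← hsum, transU, hcoord, Pi.smul_apply, hwu, smul_eq_mul, mul_one]
  have habs : ‖transU M t u u - transU M t u v‖ = 1 := by
    rw [hval, ← Complex.exp_eq_exp_ℂ, Complex.norm_exp]
    norm_num [Complex.mul_re]
  calc (1 : ℝ) = ‖transU M t u u - transU M t u v‖ := habs.symm
    _ ≤ ‖transU M t u u‖ + ‖transU M t u v‖ :=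
        norm_sub_le _ _
end

section
/- Let M be a real symmetric n×n matrix and u, v distinct indices with e_u - e_v an eigenvector of M. Then perfect state transfer from u to v at time τ (i.e., |U(τ)_{u,v}| = 1) occurs if and only if U(τ)_{u,u} = 0, where U(τ) = exp(iτM). -/
open Matrix Complex

lemma exp_mulVec_aux {n : ℕ} (A : Matrix (Fin n) (Fin n) ℂ) (w : Fin n → ℂ) (c : ℂ)
    (hA : A *ᵥ w = c • w) :
    NormedSpace.exp A *ᵥ w = Complex.exp c • w := by
  letI : SeminormedRing (Matrix (Fin n) (Fin n) ℂ) := Matrix.linftyOpSemiNormedRing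
  letI : NormedRing (Matrix (Fin n) (Fin n) ℂ) := Matrix.linftyOpNormedRing
  letI : NormedAlgebra ℂ (Matrix (Fin n) (Fin n) ℂ) := Matrix.linftyOpNormedAlgebra
  have hpow : ∀ k : ℕ, A ^ k *ᵥ w = c ^ k • w := by
    intro k
    induction k with
    | zero => simp
    | succ k ih =>
      rw [pow_succ', ← Matrix.mulVec_mulVec, ih, Matrix.mulVec_smul, hA, smul_smul,
        pow_succ']
      rw [mul_comm]
  let φ : Matrix (Fin n) (Fin n) ℂ →ₗ[ℂ] (Fin n → ℂ) :=
    { toFun := fun B => B *ᵥ w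
      map_add' := fun B C => Matrix.add_mulVec B C w
      map_smul' := fun a B => Matrix.smul_mulVec a B w }
  let φ' := LinearMap.toContinuousLinearMap φ
  have hsum : Summable fun k : ℕ => (((Nat.factorial k : ℕ) : ℂ))⁻¹ • A ^ k :=
    NormedSpace.expSeries_summable' (𝕂 := ℂ) A
  have hsumc : Summable fun k : ℕ => (((Nat.factorial k : ℕ) : ℂ))⁻¹ * c ^ k := by
    simpa [smul_eq_mul] using NormedSpace.expSeries_summable' (𝕂 := ℂ) c
  have key : NormedSpace.exp A *ᵥ w = φ' (NormedSpace.exp A) := rfl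
  rw [key, NormedSpace.exp_eq_tsum (𝕂 := ℂ), φ'.map_tsum hsum]
  have : ∀ k : ℕ, φ' ((((Nat.factorial k : ℕ) : ℂ))⁻¹ • A ^ k) = ((((Nat.factorial k : ℕ) : ℂ))⁻¹ * c ^ k) • w := by
    intro k
    show (((((Nat.factorial k : ℕ) : ℂ))⁻¹ • A ^ k) *ᵥ w) = _
    rw [Matrix.smul_mulVec, hpow, smul_smul]
  simp_rw [this]
  rw [hsumc.tsum_smul_const, Complex.exp_eq_exp_ℂ, NormedSpace.exp_eq_tsum (𝕂 := ℂ)]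
  simp [smul_eq_mul]

theorem stmt2 {n : ℕ} (M : Matrix (Fin n) (Fin n) ℝ) (hM : M.IsSymm)
    (u v : Fin n) (huv : u ≠ v) (θ : ℝ)
    (h : M *ᵥ (Pi.single u 1 - Pi.single v 1) = θ • (Pi.single u 1 - Pi.single v 1))
    (τ : ℝ) :
    ‖transU M τ u v‖ = 1 ↔ transU M τ u u = 0 := by
  set B : Matrix (Fin n) (Fin n) ℂ := M.map (fun x => (x : ℂ)) with hBdef
  set A : Matrix (Fin n) (Fin n) ℂ := (Complex.I * (τ : ℂ)) • B with hAdef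
  set U : Matrix (Fin n) (Fin n) ℂ := transU M τ with hUdef
  have hUA : U = NormedSpace.exp A := rfl
  -- skew-hermitian
  have hAH : Aᴴ = -A := by
    ext i j
    simp [hAdef, hBdef, Matrix.conjTranspose_apply, Matrix.map_apply, hM.apply, mul_comm]
  -- unitary : U * Uᴴ = 1
  have hUn : U * Uᴴ = 1 := by
    rw [hUA, ← Matrix.exp_conjTranspose, hAH,
      ← Matrix.exp_add_of_commute A (-A) ((Commute.refl A).neg_right), add_neg_cancel]
    letI : SeminormedRing (Matrix (Fin n) (Fin n) ℂ) := Matrix.linftyOpSemiNormedRing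
    letI : NormedRing (Matrix (Fin n) (Fin n) ℂ) := Matrix.linftyOpNormedRing
    letI : NormedAlgebra ℂ (Matrix (Fin n) (Fin n) ℂ) := Matrix.linftyOpNormedAlgebra
    exact NormedSpace.exp_zero
  -- row norm 1
  have hrow : ∑ k, Complex.normSq (U u k) = 1 := by
    have h1 : (U * Uᴴ) u u = 1 := by rw [hUn]; simp
    have h2 : ∑ k, (Complex.normSq (U u k) : ℂ) = 1 := by
      rw [← h1, Matrix.mul_apply]
      refine Finset.sum_congr rfl fun k _ => ?_
      rw [Matrix.conjTranspose_apply]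
      simpa using (Complex.mul_conj (U u k)).symm
    exact_mod_cast h2
  -- eigenvector relation
  have hw : (fun i => (((Pi.single u 1 - Pi.single v 1 : Fin n → ℝ)) i : ℂ)) =
      (Pi.single u 1 - Pi.single v 1 : Fin n → ℂ) := by
    ext i
    by_cases hiu : i = u <;> by_cases hiv : i = v <;>
      simp_all [Pi.single_apply]
  have hBw : B *ᵥ (Pi.single u 1 - Pi.single v 1 : Fin n → ℂ) =
      (θ : ℂ) • (Pi.single u 1 - Pi.single v 1 : Fin n → ℂ) := by
    rw [← hw]
    ext i
    have hi := congrFun h i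
    simp only [Pi.smul_apply, smul_eq_mul] at hi
    simp only [Matrix.mulVec, dotProduct, Matrix.map_apply, Pi.smul_apply, smul_eq_mul, hBdef]
    rw [← Complex.ofReal_mul, ← hi]
    simp only [Matrix.mulVec, dotProduct]
    push_cast
    rfl
  have hAw : A *ᵥ (Pi.single u 1 - Pi.single v 1 : Fin n → ℂ) =
      (Complex.I * τ * θ) • (Pi.single u 1 - Pi.single v 1 : Fin n → ℂ) := by
    rw [hAdef, Matrix.smul_mulVec, hBw, smul_smul]
  have hUw := exp_mulVec_aux A _ _ hAw
  rw [← hUA] at hUw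
  have hkey : U u u - U u v = Complex.exp (Complex.I * τ * θ) := by
    have := congrFun hUw u
    simp only [Matrix.mulVec_sub, Matrix.mulVec_single, Pi.sub_apply, Pi.smul_apply,
      smul_eq_mul] at this
    simpa [huv, Pi.single_apply, huv.symm] using this
  have habs : ‖Complex.exp (Complex.I * τ * θ)‖ = 1 := by
    rw [Complex.norm_exp]
    simp
  constructor
  · intro h1
    have hnsv : Complex.normSq (U u v) = 1 := by
      rw [← Complex.sq_norm, h1, one_pow]
    have hv : v ∈ Finset.univ := Finset.mem_univ v
    have hsplit : ∑ k ∈ Finset.univ.erase v, Complex.normSq (U u k) = 0 := by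
      have h3 : Complex.normSq (U u v) + ∑ k ∈ Finset.univ.erase v, Complex.normSq (U u k)
          = ∑ k, Complex.normSq (U u k) := Finset.add_sum_erase _ (fun k => Complex.normSq (U u k)) hv
      linarith
    have hzero : Complex.normSq (U u u) = 0 := by
      have hnn : ∀ k ∈ Finset.univ.erase v, 0 ≤ Complex.normSq (U u k) :=
        fun k _ => Complex.normSq_nonneg _
      have := (Finset.sum_eq_zero_iff_of_nonneg hnn).mp hsplit u
        (Finset.mem_erase.mpr ⟨huv, Finset.mem_univ u⟩)
      exact this
    exact Complex.normSq_eq_zero.mp hzero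
  · intro h0
    rw [h0, zero_sub] at hkey
    have : U u v = -Complex.exp (Complex.I * τ * θ) := by linear_combination -hkey
    rw [this, norm_neg]
    exact habs
end

section
/- Let A = η(J_m - I_m) + ωI_m with m ≥ 2 and η ≠ 0 real, and U(t) = exp(itA). Then for distinct indices u, v: |U(t)_{u,v}|² = (2/m²)(1 - cos(mηt)) and |U(t)_{u,u}|² = 1 - (m-1)|U(t)_{u,v}|². In particular |U(t)_{u,v}|² ≤ 4/m², with maximum attained exactly at t = jπ/(mη) for odd integers j, and |U(t)_{u,v}|² = 0 exactly at t = jπ/(mη) for even integers j. -/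
open Matrix Complex

/-- The all-ones matrix. -/
def allOnes (m : ℕ) (R : Type*) [One R] : Matrix (Fin m) (Fin m) R :=
  Matrix.of fun _ _ => 1

lemma exp_idem {m : ℕ} (P : Matrix (Fin m) (Fin m) ℂ) (hP : P * P = P) (c : ℂ) :
    NormedSpace.exp (c • P) = 1 + (Complex.exp c - 1) • P := by
  letI : SeminormedRing (Matrix (Fin m) (Fin m) ℂ) := Matrix.linftyOpSemiNormedRing
  letI : NormedRing (Matrix (Fin m) (Fin m) ℂ) := Matrix.linftyOpNormedRing
  letI : NormedAlgebra ℂ (Matrix (Fin m) (Fin m) ℂ) := Matrix.linftyOpNormedAlgebra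
  have hPn : ∀ n : ℕ, P ^ (n + 1) = P := by
    intro n
    induction n with
    | zero => simp
    | succ k ih => rw [pow_succ, ih, hP]
  have hsum : Summable fun n : ℕ => (((Nat.factorial n : ℂ))⁻¹) • (c • P) ^ n :=
    NormedSpace.expSeries_summable' (c • P)
  rw [NormedSpace.exp_eq_tsum ℂ]
  simp only []
  rw [Summable.tsum_eq_zero_add hsum]
  have hterm : ∀ n : ℕ, ((Nat.factorial (n + 1) : ℂ)⁻¹) • (c • P) ^ (n + 1)
      = (((Nat.factorial (n + 1) : ℂ)⁻¹) * c ^ (n + 1)) • P := by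
    intro n
    rw [smul_pow, hPn, smul_smul]
  simp only [hterm, pow_zero]
  have hsum2 : Summable fun n : ℕ => ((Nat.factorial (n + 1) : ℂ)⁻¹) * c ^ (n + 1) := by
    have h := NormedSpace.expSeries_summable' (𝕂 := ℂ) c
    simp only [smul_eq_mul] at h
    exact h.comp_injective Nat.succ_injective
  rw [Summable.tsum_smul_const hsum2]
  congr 1
  · simp
  · congr 1
    have hc : Complex.exp c = ∑' n : ℕ, (((Nat.factorial n : ℂ))⁻¹) * c ^ n := by
      rw [Complex.exp_eq_exp_ℂ, NormedSpace.exp_eq_tsum ℂ]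
      simp [smul_eq_mul]
    have hs : Summable fun n : ℕ => (((Nat.factorial n : ℂ))⁻¹) * c ^ n := by
      have h := NormedSpace.expSeries_summable' (𝕂 := ℂ) c
      simpa [smul_eq_mul] using h
    rw [hc, Summable.tsum_eq_zero_add hs]
    simp

lemma transU_formula {m : ℕ} (hm : 2 ≤ m) (η ω : ℝ)
    (A : Matrix (Fin m) (Fin m) ℝ)
    (hA : A = η • (allOnes m ℝ - 1) + ω • 1) (t : ℝ) :
    transU A t = Complex.exp (Complex.I * t * (ω - η)) •
      (1 + (Complex.exp (Complex.I * t * (η * m)) - 1) • ((m : ℂ)⁻¹ • allOnes m ℂ)) := by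
  have hm0 : (m : ℂ) ≠ 0 := by
    exact_mod_cast Nat.cast_ne_zero.mpr (by omega)
  set P : Matrix (Fin m) (Fin m) ℂ := (m : ℂ)⁻¹ • allOnes m ℂ with hPdef
  have hP : P * P = P := by
    ext i j
    simp only [hPdef, Matrix.mul_apply, Matrix.smul_apply, allOnes, Matrix.of_apply,
      smul_eq_mul, mul_one, Finset.sum_const, Finset.card_univ, Fintype.card_fin,
      nsmul_eq_mul]
    field_simp
  set d : ℂ := Complex.I * t * (ω - η) with hd
  set c : ℂ := Complex.I * t * (η * m) with hc
  have hB : (Complex.I * (t : ℂ)) • A.map (fun x => (x : ℂ)) = d • (1 : Matrix (Fin m) (Fin m) ℂ) + c • P := by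
    ext i j
    simp only [hA, Matrix.smul_apply, Matrix.map_apply, Matrix.add_apply, Matrix.sub_apply,
      Matrix.one_apply, allOnes, Matrix.of_apply, hPdef, smul_eq_mul, hd, hc]
    by_cases h : i = j
    · simp only [h, if_pos rfl]
      push_cast
      field_simp
      ring
    · simp only [if_neg h]
      push_cast
      field_simp
      ring
  have hcomm : Commute (d • (1 : Matrix (Fin m) (Fin m) ℂ)) (c • P) :=
    ((Commute.one_left (c • P)).smul_left d)
  rw [transU, hB, Matrix.exp_add_of_commute _ _ hcomm, exp_idem P hP c]
  have h1 : NormedSpace.exp (d • (1 : Matrix (Fin m) (Fin m) ℂ)) =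
      Complex.exp d • (1 : Matrix (Fin m) (Fin m) ℂ) := by
    letI : SeminormedRing (Matrix (Fin m) (Fin m) ℂ) := Matrix.linftyOpSemiNormedRing
    letI : NormedRing (Matrix (Fin m) (Fin m) ℂ) := Matrix.linftyOpNormedRing
    letI : NormedAlgebra ℂ (Matrix (Fin m) (Fin m) ℂ) := Matrix.linftyOpNormedAlgebra
    have : d • (1 : Matrix (Fin m) (Fin m) ℂ) = algebraMap ℂ (Matrix (Fin m) (Fin m) ℂ) d :=
      (Algebra.algebraMap_eq_smul_one d).symm
    rw [this, Complex.exp_eq_exp_ℂ, ← Algebra.algebraMap_eq_smul_one]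
    exact (NormedSpace.algebraMap_exp_comm d).symm
  rw [h1, smul_mul_assoc, one_mul]

theorem stmt6 {m : ℕ} (hm : 2 ≤ m) (η ω : ℝ) (hη : η ≠ 0)
    (A : Matrix (Fin m) (Fin m) ℝ)
    (hA : A = η • (allOnes m ℝ - 1) + ω • 1)
    (u v : Fin m) (huv : u ≠ v) :
    ∀ t : ℝ,
      ‖transU A t u v‖ ^ 2 = (2 / (m : ℝ) ^ 2) * (1 - Real.cos (m * η * t)) ∧
      ‖transU A t u u‖ ^ 2 = 1 - ((m : ℝ) - 1) * ‖transU A t u v‖ ^ 2 ∧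
      ‖transU A t u v‖ ^ 2 ≤ 4 / (m : ℝ) ^ 2 ∧
      (‖transU A t u v‖ ^ 2 = 4 / (m : ℝ) ^ 2 ↔
        ∃ j : ℤ, Odd j ∧ t = j * Real.pi / (m * η)) ∧
      (‖transU A t u v‖ ^ 2 = 0 ↔
        ∃ j : ℤ, Even j ∧ t = j * Real.pi / (m * η)) := by
  intro t
  have hm0R : (m : ℝ) ≠ 0 := by
    exact_mod_cast Nat.cast_ne_zero.mpr (by omega)
  have hm2 : (0 : ℝ) < (m : ℝ) ^ 2 := by positivity
  have hmη : (m : ℝ) * η ≠ 0 := mul_ne_zero hm0R hη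
  set s : ℝ := (m : ℝ) * η * t with hs
  set d : ℂ := Complex.I * t * (ω - η) with hd
  set c : ℂ := Complex.I * t * (η * m) with hc
  have Huv : transU A t u v = Complex.exp d * ((Complex.exp c - 1) * (m : ℂ)⁻¹) := by
    rw [transU_formula hm η ω A hA t]
    simp [Matrix.smul_apply, Matrix.add_apply, Matrix.one_apply_ne huv, allOnes,
      smul_eq_mul, ← hd, ← hc]
  have Huu : transU A t u u = Complex.exp d * (1 + (Complex.exp c - 1) * (m : ℂ)⁻¹) := by
    rw [transU_formula hm η ω A hA t]
    simp [Matrix.smul_apply, Matrix.add_apply, Matrix.one_apply_eq, allOnes,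
      smul_eq_mul, ← hd, ← hc]
  have hde : ‖Complex.exp d‖ = 1 := by
    rw [Complex.norm_exp]
    have : d.re = 0 := by
      have : d = ((t * (ω - η) : ℝ) : ℂ) * Complex.I := by rw [hd]; push_cast; ring
      rw [this]
      simp
    rw [this, Real.exp_zero]
  have hcexp : Complex.exp c = (Real.cos s : ℂ) + (Real.sin s : ℂ) * Complex.I := by
    have h1 : c = ((s : ℝ) : ℂ) * Complex.I := by rw [hc, hs]; push_cast; ring
    rw [h1, Complex.exp_mul_I, Complex.ofReal_cos, Complex.ofReal_sin]
  have E1 : ‖transU A t u v‖ ^ 2 = (2 / (m : ℝ) ^ 2) * (1 - Real.cos s) := by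
    have hz : (Complex.exp c - 1) = ((Real.cos s - 1 : ℝ) : ℂ) + ((Real.sin s : ℝ) : ℂ) * Complex.I := by
      rw [hcexp]; push_cast; ring
    rw [Huv, norm_mul, norm_mul, hde, one_mul, mul_pow, hz, Complex.sq_norm,
      Complex.normSq_add_mul_I, norm_inv, Complex.norm_natCast]
    have := Real.sin_sq_add_cos_sq s
    field_simp
    nlinarith [this]
  have E2 : ‖transU A t u u‖ ^ 2
      = 1 - ((m : ℝ) - 1) * ((2 / (m : ℝ) ^ 2) * (1 - Real.cos s)) := by
    have hz : (1 + (Complex.exp c - 1) * (m : ℂ)⁻¹)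
        = ((1 - (m : ℝ)⁻¹ + Real.cos s * (m : ℝ)⁻¹ : ℝ) : ℂ)
          + ((Real.sin s * (m : ℝ)⁻¹ : ℝ) : ℂ) * Complex.I := by
      rw [hcexp]; push_cast; ring
    rw [Huu, norm_mul, hde, one_mul, hz, Complex.sq_norm, Complex.normSq_add_mul_I]
    have := Real.sin_sq_add_cos_sq s
    field_simp
    nlinarith [this]
  refine ⟨E1, by rw [E2, E1], ?_, ?_, ?_⟩
  · rw [E1]
    rw [div_mul_eq_mul_div, div_le_div_iff₀ hm2 hm2]
    nlinarith [Real.neg_one_le_cos s, hm2]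
  · rw [E1]
    constructor
    · intro h
      have hcos : Real.cos s = -1 := by
        rw [div_mul_eq_mul_div, div_eq_div_iff (ne_of_gt hm2) (ne_of_gt hm2)] at h
        nlinarith [hm2]
      rw [Real.cos_eq_neg_one_iff] at hcos
      obtain ⟨k, hk⟩ := hcos
      refine ⟨2 * k + 1, ⟨k, by ring⟩, ?_⟩
      rw [eq_div_iff hmη]
      push_cast
      rw [hs] at hk
      linarith [hk]
    · rintro ⟨j, ⟨k, hkj⟩, rfl⟩
      have hseq : s = (j : ℝ) * Real.pi := by
        rw [hs]; field_simp
      have hcos : Real.cos s = -1 := by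
        rw [Real.cos_eq_neg_one_iff]
        exact ⟨k, by rw [hseq, hkj]; push_cast; ring⟩
      rw [hcos]
      field_simp
      ring
  · rw [E1]
    constructor
    · intro h
      have hcos : Real.cos s = 1 := by
        have h2 : (2 / (m : ℝ) ^ 2) ≠ 0 := by positivity
        have := mul_eq_zero.mp h
        rcases this with h' | h'
        · exact absurd h' h2
        · linarith
      rw [Real.cos_eq_one_iff] at hcos
      obtain ⟨n, hn⟩ := hcos
      refine ⟨2 * n, ⟨n, by ring⟩, ?_⟩
      rw [eq_div_iff hmη]
      push_cast
      rw [hs] at hn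
      linarith [hn]
    · rintro ⟨j, ⟨k, hkj⟩, rfl⟩
      have hseq : s = (j : ℝ) * Real.pi := by
        rw [hs]; field_simp
      have hcos : Real.cos s = 1 := by
        rw [Real.cos_eq_one_iff]
        exact ⟨k, by rw [hseq, hkj]; push_cast; ring⟩
      rw [hcos]
      ring
end

section
/- Let m ≥ 2, η ≠ 0, A = η(J_m - I_m) + ωI_m, and U(t) = exp(itA). If m ≥ 3, then there is no time t and no pair of distinct indices u, v with |U(t)_{u,v}| = 1; i.e., the weighted complete graph K_m(ω,η) admits perfect state transfer if and only if m = 2. -/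
open Matrix Complex

attribute [local instance] Matrix.linftyOpNormedRing Matrix.linftyOpNormedAlgebra

lemma allOnes_mul_self (m : ℕ) : (allOnes m ℂ) * allOnes m ℂ = (m:ℂ) • allOnes m ℂ := by
  ext i j; simp [Matrix.mul_apply, allOnes]

lemma allOnes_pow (m n : ℕ) : (allOnes m ℂ)^(n+1) = (m:ℂ)^n • allOnes m ℂ := by
  induction n with
  | zero => simp
  | succ k ih =>
    rw [pow_succ, ih, Matrix.smul_mul, allOnes_mul_self, smul_smul, pow_succ]

lemma exp_smul_allOnes (m : ℕ) (hm : 0 < m) (a : ℂ) :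
    NormedSpace.exp (a • allOnes m ℂ)
      = 1 + ((Complex.exp (a*m) - 1)/m) • allOnes m ℂ := by
  have hmc : (m:ℂ) ≠ 0 := Nat.cast_ne_zero.mpr hm.ne'
  set J := allOnes m ℂ
  have hS := NormedSpace.exp_series_hasSum_exp' (𝕂 := ℂ) (a • J)
  have hg := (NormedSpace.expSeries_div_hasSum_exp (a*(m:ℂ))).smul_const J
  have hg' := (hasSum_nat_add_iff' 1).mpr hg
  have hf' := (hasSum_nat_add_iff' 1).mpr hS
  simp only [Finset.range_one, Finset.sum_singleton, pow_zero, Nat.factorial_zero,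
    Nat.cast_one, inv_one, one_smul] at hg' hf'
  have key : ∀ n : ℕ, (m:ℂ) • (((Nat.factorial (n+1) : ℕ) : ℂ)⁻¹ • (a • J)^(n+1))
      = ((a*(m:ℂ))^(n+1) / ((Nat.factorial (n+1) : ℕ) : ℂ)) • J := by
    intro n
    rw [smul_pow, allOnes_pow, smul_smul, smul_smul, smul_smul]
    congr 1
    field_simp
    ring
  have h2 : HasSum (fun n : ℕ => ((a*(m:ℂ))^(n+1) / ((Nat.factorial (n+1) : ℕ) : ℂ)) • J)
      ((m:ℂ) • (NormedSpace.exp (a • J) - 1)) := by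
    have := hf'.const_smul (m:ℂ)
    simp only [key] at this
    exact this
  have heq := hg'.unique h2
  have hE : Complex.exp (a*m) = NormedSpace.exp (a*(m:ℂ)) := by
    rw [Complex.exp_eq_exp_ℂ]
  rw [hE]
  have h3 : NormedSpace.exp (a • J) - 1
      = (m:ℂ)⁻¹ • (NormedSpace.exp (a*(m:ℂ)) • J - (1/1 : ℂ) • J) := by
    rw [heq, smul_smul, inv_mul_cancel₀ hmc, one_smul]
  have h4 : ((NormedSpace.exp (a*(m:ℂ)) - 1)/m) • J
      = (m:ℂ)⁻¹ • (NormedSpace.exp (a*(m:ℂ)) • J - (1/1 : ℂ) • J) := by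
    rw [one_div_one, ← sub_smul, smul_smul, div_eq_inv_mul]
  rw [h4, ← h3]
  abel


lemma transU_offdiag {m : ℕ} (hm : 2 ≤ m) (η ω : ℝ)
    (A : Matrix (Fin m) (Fin m) ℝ)
    (hA : A = η • (allOnes m ℝ - 1) + ω • 1) (t : ℝ) (u v : Fin m) (huv : u ≠ v) :
    ‖transU A t u v‖
      = ‖Complex.exp ((t*η*m : ℝ) * I) - 1‖ / m := by
  have hm0 : 0 < m := lt_of_lt_of_le (by norm_num) hm
  have hmap : A.map (fun x => (x:ℂ)) = (η:ℂ) • allOnes m ℂ + ((ω:ℂ) - η) • 1 := by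
    ext i j
    by_cases h : i = j <;>
      simp [hA, allOnes, Matrix.one_apply, h] <;> push_cast <;> ring
  have hsplit : (Complex.I * (t : ℂ)) • A.map (fun x => (x : ℂ))
      = (I*t*η) • allOnes m ℂ + (((t*(ω-η) : ℝ) : ℂ) * I) • (1 : Matrix (Fin m) (Fin m) ℂ) := by
    rw [hmap, smul_add, smul_smul, smul_smul]
    congr 2 <;> push_cast <;> ring
  have hcomm : Commute ((I*t*η) • allOnes m ℂ)
      ((((t*(ω-η) : ℝ) : ℂ) * I) • (1 : Matrix (Fin m) (Fin m) ℂ)) :=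
    ((Commute.one_right (allOnes m ℂ)).smul_left _).smul_right _
  have hexp1 : NormedSpace.exp ((I*t*η) • allOnes m ℂ)
      = 1 + ((Complex.exp (I*t*η*m) - 1)/m) • allOnes m ℂ := exp_smul_allOnes m hm0 _
  have hexp2 : NormedSpace.exp ((((t*(ω-η) : ℝ) : ℂ) * I) • (1 : Matrix (Fin m) (Fin m) ℂ))
      = Complex.exp (((t*(ω-η) : ℝ) : ℂ) * I) • (1 : Matrix (Fin m) (Fin m) ℂ) := by
    rw [← Algebra.algebraMap_eq_smul_one]
    erw [← NormedSpace.algebraMap_exp_comm (𝕂 := ℂ) (𝔸 := Matrix (Fin m) (Fin m) ℂ)]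
    rw [Complex.exp_eq_exp_ℂ, Algebra.algebraMap_eq_smul_one]
  have : transU A t = NormedSpace.exp ((I*t*η) • allOnes m ℂ)
      * NormedSpace.exp ((((t*(ω-η) : ℝ) : ℂ) * I) • (1 : Matrix (Fin m) (Fin m) ℂ)) := by
    rw [transU, hsplit]; exact NormedSpace.exp_add_of_commute hcomm
  rw [this, hexp1, hexp2]
  have hentry : ((1 + ((Complex.exp (I*t*η*m) - 1)/m) • allOnes m ℂ)
      * (Complex.exp (((t*(ω-η) : ℝ) : ℂ) * I) • (1 : Matrix (Fin m) (Fin m) ℂ))) u v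
      = Complex.exp (((t*(ω-η) : ℝ) : ℂ) * I) * ((Complex.exp (I*t*η*m) - 1)/m) := by
    rw [Matrix.mul_smul, mul_one, Matrix.smul_apply]
    simp [Matrix.add_apply, Matrix.one_apply, huv, allOnes]
  rw [hentry, norm_mul, Complex.norm_exp_ofReal_mul_I, one_mul, norm_div]
  congr 2
  · congr 1; push_cast; ring
  · simp

lemma abs_bound (θ : ℝ) : ‖Complex.exp ((θ:ℂ) * I) - 1‖ ≤ 2 := by
  calc ‖Complex.exp ((θ:ℂ) * I) - 1‖
      ≤ ‖Complex.exp ((θ:ℂ) * I)‖ + ‖(1:ℂ)‖ :=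
        norm_sub_le _ _
    _ = 2 := by rw [Complex.norm_exp_ofReal_mul_I, norm_one]; norm_num


theorem stmt7 {m : ℕ} (hm : 2 ≤ m) (η ω : ℝ) (hη : η ≠ 0)
    (A : Matrix (Fin m) (Fin m) ℝ)
    (hA : A = η • (allOnes m ℝ - 1) + ω • 1) :
    (3 ≤ m → ∀ t : ℝ, ∀ u v : Fin m, u ≠ v → ‖transU A t u v‖ ≠ 1) ∧
    ((∃ t : ℝ, ∃ u v : Fin m, u ≠ v ∧ ‖transU A t u v‖ = 1) ↔ m = 2) := by
  have hm0 : (0:ℝ) < m := by positivity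
  have key : ∀ t : ℝ, ∀ u v : Fin m, u ≠ v →
      ‖transU A t u v‖ ≤ 2 / m := by
    intro t u v huv
    rw [transU_offdiag hm η ω A hA t u v huv]
    have := div_le_div_of_nonneg_right (c := (m:ℝ)) (abs_bound (t*η*m)) ?_
    · exact this
    · exact hm0.le
  constructor
  · intro h3 t u v huv habs
    have h1 := key t u v huv
    rw [habs] at h1
    have h2 : (3:ℝ) ≤ m := by exact_mod_cast h3
    rw [le_div_iff₀ hm0, one_mul] at h1
    linarith
  · constructor
    · rintro ⟨t, u, v, huv, habs⟩
      have h1 := key t u v huv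
      rw [habs] at h1
      rw [le_div_iff₀ hm0, one_mul] at h1
      have : m ≤ 2 := by exact_mod_cast h1
      omega
    · rintro rfl
      refine ⟨Real.pi / (2*η), 0, 1, by decide, ?_⟩
      rw [transU_offdiag hm η ω A hA _ 0 1 (by decide)]
      have hθ : (Real.pi / (2*η)) * η * (2:ℕ) = Real.pi := by
        field_simp; ring
      rw [hθ]
      rw [show ((Real.pi : ℝ) : ℂ) = (Real.pi : ℂ) from rfl, Complex.exp_pi_mul_I]
      norm_num
end

section
/- For every n ≥ 3 and n-1 = λ, the inequality (1 - 1/(8n⁴λ⁴))² ≥ 1/(n-1) holds strictly; consequently, in the complete graph K_n with n ≥ 3, there is no time τ and pair of distinct vertices u, v with |U(τ)_{u,v}| ≥ 1 - 1/(8n⁴(n-1)⁴), where U(t) = exp(it A(K_n)). -/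
open Matrix Complex

set_option maxHeartbeats 1000000 in
/-- Exponential of a scalar multiple of an idempotent. -/
lemma exp_smul_idem {A : Type*} [NormedRing A] [NormedAlgebra ℂ A] [CompleteSpace A]
    (p : A) (hp : p * p = p) (a : ℂ) :
    NormedSpace.exp (a • p) = 1 + (NormedSpace.exp a - 1) • p := by
  have hip : IsIdempotentElem p := hp
  have hpow : ∀ k : ℕ, (a • p) ^ (k + 1) = a ^ (k + 1) • p := by
    intro k
    rw [smul_pow, hip.pow_succ_eq]
  have hsA : Summable (fun k : ℕ => ((Nat.factorial k : ℂ))⁻¹ • (a • p) ^ k) :=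
    NormedSpace.expSeries_summable' (𝕂 := ℂ) (a • p)
  have hsa : Summable (fun k : ℕ => ((Nat.factorial k : ℂ))⁻¹ • a ^ k) :=
    NormedSpace.expSeries_summable' (𝕂 := ℂ) a
  have hA : NormedSpace.exp (a • p) =
      1 + ∑' k : ℕ, ((Nat.factorial (k+1) : ℂ))⁻¹ • (a • p) ^ (k + 1) := by
    rw [NormedSpace.exp_eq_tsum ℂ]
    dsimp only
    rw [Summable.tsum_eq_zero_add hsA]
    simp
  have ha : NormedSpace.exp a =
      1 + ∑' k : ℕ, ((Nat.factorial (k+1) : ℂ))⁻¹ • a ^ (k + 1) := by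
    rw [NormedSpace.exp_eq_tsum ℂ]
    dsimp only
    rw [Summable.tsum_eq_zero_add hsa]
    simp
  rw [hA]
  congr 1
  calc ∑' k : ℕ, ((Nat.factorial (k+1) : ℂ))⁻¹ • (a • p) ^ (k + 1)
      = ∑' k : ℕ, (((Nat.factorial (k+1) : ℂ))⁻¹ • a ^ (k + 1)) • p := by
        refine tsum_congr fun k => ?_
        rw [hpow k, smul_smul, smul_eq_mul]
    _ = (∑' k : ℕ, ((Nat.factorial (k+1) : ℂ))⁻¹ • a ^ (k + 1)) • p := by
        refine (Summable.tsum_smul_const ?_ p)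
        exact (summable_nat_add_iff 1).mpr hsa
    _ = (NormedSpace.exp a - 1) • p := by rw [ha]; congr 1; ring

theorem stmt9 {n : ℕ} (hn : 3 ≤ n)
    (A : Matrix (Fin n) (Fin n) ℝ) (hA : A = allOnes n ℝ - 1) :
    (1 - 1 / (8 * (n : ℝ) ^ 4 * ((n : ℝ) - 1) ^ 4)) ^ 2 > 1 / ((n : ℝ) - 1) ∧
    ¬∃ (τ : ℝ) (u v : Fin n), u ≠ v ∧
        1 - 1 / (8 * (n : ℝ) ^ 4 * ((n : ℝ) - 1) ^ 4) ≤ ‖transU A τ u v‖ := by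
  have hx : (3 : ℝ) ≤ (n : ℝ) := by exact_mod_cast hn
  have h81 : (81 : ℝ) ≤ (n : ℝ) ^ 4 := by
    calc (81:ℝ) = 3 ^ 4 := by norm_num
    _ ≤ (n:ℝ) ^ 4 := pow_le_pow_left₀ (by norm_num) hx 4
  have h16 : (16 : ℝ) ≤ ((n : ℝ) - 1) ^ 4 := by
    calc (16:ℝ) = 2 ^ 4 := by norm_num
    _ ≤ ((n:ℝ) - 1) ^ 4 := pow_le_pow_left₀ (by norm_num) (by linarith) 4
  have hD : (10368 : ℝ) ≤ 8 * (n : ℝ) ^ 4 * ((n : ℝ) - 1) ^ 4 := by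
    have := mul_le_mul h81 h16 (by norm_num) (by positivity)
    nlinarith
  have hDpos : (0 : ℝ) < 8 * (n : ℝ) ^ 4 * ((n : ℝ) - 1) ^ 4 := by linarith
  have hsmall : 1 / (8 * (n : ℝ) ^ 4 * ((n : ℝ) - 1) ^ 4) ≤ 1 / 10368 := by
    apply one_div_le_one_div_of_le <;> linarith
  have hinvpos : 0 < 1 / (8 * (n : ℝ) ^ 4 * ((n : ℝ) - 1) ^ 4) := by positivity
  constructor
  · have h2 : 1 / ((n : ℝ) - 1) ≤ 1 / 2 := by
      apply one_div_le_one_div_of_le <;> linarith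
    nlinarith
  · rintro ⟨τ, u, v, huv, hle⟩
    -- compute the entry
    have hnne : ((n : ℂ)) ≠ 0 := by
      simp only [ne_eq, Nat.cast_eq_zero]; omega
    set c : ℂ := Complex.I * (τ : ℂ) with hc
    set J : Matrix (Fin n) (Fin n) ℂ := allOnes n ℂ with hJ
    have hmap : A.map (fun x => (x : ℂ)) = J - 1 := by
      ext i j
      simp [hA, hJ, allOnes, Matrix.map_apply, Matrix.sub_apply, Matrix.one_apply]
      split <;> simp
    have hJJ : J * J = (n : ℂ) • J := by
      ext i j
      simp [hJ, allOnes, Matrix.mul_apply, Matrix.smul_apply]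
    letI : SeminormedRing (Matrix (Fin n) (Fin n) ℂ) := Matrix.linftyOpSemiNormedRing
    letI : NormedRing (Matrix (Fin n) (Fin n) ℂ) := Matrix.linftyOpNormedRing
    letI : NormedAlgebra ℂ (Matrix (Fin n) (Fin n) ℂ) := Matrix.linftyOpNormedAlgebra
    set p : Matrix (Fin n) (Fin n) ℂ := (n : ℂ)⁻¹ • J with hpdef
    have hpp : p * p = p := by
      rw [hpdef, smul_mul_assoc, mul_smul_comm, hJJ, smul_smul, smul_smul]
      congr 1
      field_simp
    have hcp : (c * n) • p = c • J := by
      rw [hpdef, smul_smul, mul_assoc, mul_inv_cancel₀ hnne, mul_one]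
    have hsplit : c • (J - 1) = c • J + (-c) • (1 : Matrix (Fin n) (Fin n) ℂ) := by
      rw [smul_sub]; module
    have hcomm : Commute (c • J) ((-c) • (1 : Matrix (Fin n) (Fin n) ℂ)) :=
      ((Commute.one_right (c • J)).smul_right (-c))
    have hexp1 : NormedSpace.exp (c • J) = 1 + (NormedSpace.exp (c * n) - 1) • p := by
      rw [← hcp]; exact exp_smul_idem p hpp (c * n)
    have hexp2 : NormedSpace.exp ((-c) • (1 : Matrix (Fin n) (Fin n) ℂ))
        = NormedSpace.exp (-c) • (1 : Matrix (Fin n) (Fin n) ℂ) := by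
      refine (exp_smul_idem (1 : Matrix (Fin n) (Fin n) ℂ) (mul_one 1) (-c)).trans ?_
      rw [sub_smul, one_smul]
      abel
    have hU : transU A τ = NormedSpace.exp (c • J) *
        (NormedSpace.exp (-c) • (1 : Matrix (Fin n) (Fin n) ℂ)) := by
      rw [transU, hmap, ← hc, hsplit, Matrix.exp_add_of_commute _ _ hcomm, hexp2]
    have hescalar : ∀ z : ℂ, NormedSpace.exp z = Complex.exp z := by
      intro z; rw [Complex.exp_eq_exp_ℂ]
    have hentry : transU A τ u v = Complex.exp (-c) * ((Complex.exp (c * n) - 1) * (n : ℂ)⁻¹) := by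
      rw [hU, Matrix.mul_smul, Matrix.mul_one, Matrix.smul_apply, hexp1]
      rw [Matrix.add_apply, Matrix.one_apply_ne huv, Matrix.smul_apply, hpdef,
        Matrix.smul_apply]
      simp [hJ, allOnes, hescalar, smul_eq_mul]
    have hre1 : (-c).re = 0 := by simp [hc]
    have hre2 : (c * (n : ℂ)).re = 0 := by simp [hc]
    have habs : ‖transU A τ u v‖ ≤ 2 / (n : ℝ) := by
      rw [hentry]
      rw [norm_mul, norm_mul, Complex.norm_exp, hre1, Real.exp_zero, one_mul]
      have h1 : ‖Complex.exp (c * n) - 1‖ ≤ 2 := by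
        calc ‖Complex.exp (c * n) - 1‖
            ≤ ‖Complex.exp (c * n)‖ + ‖(1:ℂ)‖ := by
              simpa using norm_sub_le (Complex.exp (c * n)) 1
          _ = 2 := by rw [Complex.norm_exp, hre2, Real.exp_zero]; norm_num
      have h2 : ‖((n : ℂ))⁻¹‖ = ((n : ℝ))⁻¹ := by
        rw [norm_inv]; simp
      rw [h2]
      have hnpos : (0 : ℝ) < (n : ℝ) := by linarith
      rw [div_eq_mul_inv]
      exact mul_le_mul_of_nonneg_right h1 (by positivity)
    have h23 : 2 / (n : ℝ) ≤ 2 / 3 := by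
      rw [div_le_div_iff₀ (by linarith) (by norm_num)]; linarith
    nlinarith [hle.trans (habs.trans h23)]
end

section
/- Let M be a real symmetric matrix, u an index, and suppose the eigenvalue support σ_u(M) = {λ : E_λ e_u ≠ 0} has exactly two elements λ₁ > λ₂ (where E_λ are the spectral projections of M). Then u is periodic with minimum period 2π/(λ₁ - λ₂): |U(2π/(λ₁-λ₂))_{u,u}| = 1 and no smaller positive time works. -/
open Matrix Complex

/-- `S, E` constitute the spectral decomposition of the real symmetric matrix `M`
(viewed as a complex matrix): the `E lam` for `lam ∈ S` are mutually orthogonal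
Hermitian projections summing to the identity, and `M = ∑ lam • E lam`. -/
def IsSpectralDecompOf {n : ℕ} (M : Matrix (Fin n) (Fin n) ℝ)
    (S : Finset ℝ) (E : ℝ → Matrix (Fin n) (Fin n) ℂ) : Prop :=
  (∀ lam ∈ S, (E lam).IsHermitian ∧ E lam * E lam = E lam) ∧
  (∀ lam ∈ S, ∀ mu ∈ S, lam ≠ mu → E lam * E mu = 0) ∧
  (∑ lam ∈ S, E lam) = 1 ∧
  M.map (fun x => (x : ℂ)) = ∑ lam ∈ S, (lam : ℂ) • E lam

lemma spectral_pow {n : ℕ} (S : Finset ℝ) (E : ℝ → Matrix (Fin n) (Fin n) ℂ)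
    (hidem : ∀ lam ∈ S, E lam * E lam = E lam)
    (horth : ∀ lam ∈ S, ∀ mu ∈ S, lam ≠ mu → E lam * E mu = 0)
    (hsum : (∑ lam ∈ S, E lam) = 1)
    (c : ℝ → ℂ) (k : ℕ) :
    (∑ lam ∈ S, c lam • E lam) ^ k = ∑ lam ∈ S, (c lam) ^ k • E lam := by
  induction k with
  | zero => simpa using hsum.symm
  | succ k ih =>
    rw [pow_succ, ih, Finset.sum_mul_sum]
    refine Finset.sum_congr rfl fun lam hlam => ?_
    rw [Finset.sum_eq_single_of_mem lam hlam (fun mu hmu hne => by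
      rw [smul_mul_smul_comm, horth lam hlam mu hmu (Ne.symm hne), smul_zero])]
    rw [smul_mul_smul_comm, hidem lam hlam, ← pow_succ]

lemma spectral_exp {n : ℕ} (S : Finset ℝ) (E : ℝ → Matrix (Fin n) (Fin n) ℂ)
    (hidem : ∀ lam ∈ S, E lam * E lam = E lam)
    (horth : ∀ lam ∈ S, ∀ mu ∈ S, lam ≠ mu → E lam * E mu = 0)
    (hsum : (∑ lam ∈ S, E lam) = 1)
    (c : ℝ → ℂ) :
    NormedSpace.exp (∑ lam ∈ S, c lam • E lam)
      = ∑ lam ∈ S, Complex.exp (c lam) • E lam := by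
  rw [NormedSpace.exp_eq_tsum (𝕂 := ℂ)]
  have h1 : ∀ k : ℕ, (((Nat.factorial k : ℕ) : ℂ)⁻¹ • (∑ lam ∈ S, c lam • E lam) ^ k)
      = ∑ lam ∈ S, (((Nat.factorial k : ℕ) : ℂ)⁻¹ • (c lam) ^ k) • E lam := by
    intro k
    rw [spectral_pow S E hidem horth hsum c k, Finset.smul_sum]
    exact Finset.sum_congr rfl fun lam _ => by rw [smul_assoc]
  simp_rw [h1]
  rw [Summable.tsum_finsetSum (fun lam _ => ((NormedSpace.expSeries_summable' (𝕂 := ℂ) (c lam)).smul_const _))]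
  refine Finset.sum_congr rfl fun lam _ => ?_
  rw [Summable.tsum_smul_const (NormedSpace.expSeries_summable' (𝕂 := ℂ) (c lam))]
  congr 1
  rw [Complex.exp_eq_exp_ℂ, NormedSpace.exp_eq_tsum (𝕂 := ℂ)]

theorem stmt10 {n : ℕ} (M : Matrix (Fin n) (Fin n) ℝ) (hM : M.IsSymm)
    (S : Finset ℝ) (E : ℝ → Matrix (Fin n) (Fin n) ℂ)
    (hSE : IsSpectralDecompOf M S E) (u : Fin n)
    (lam₁ lam₂ : ℝ) (h1 : lam₁ ∈ S) (h2 : lam₂ ∈ S) (hlt : lam₂ < lam₁)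
    (hsupp : ∀ lam ∈ S, (E lam *ᵥ Pi.single u 1 ≠ 0 ↔ lam = lam₁ ∨ lam = lam₂)) :
    ‖transU M (2 * Real.pi / (lam₁ - lam₂)) u u‖ = 1 ∧
    ∀ t : ℝ, 0 < t → t < 2 * Real.pi / (lam₁ - lam₂) →
      ‖transU M t u u‖ ≠ 1 := by
  obtain ⟨hproj, horth, hsum, hdecomp⟩ := hSE
  have hidem : ∀ lam ∈ S, E lam * E lam = E lam := fun lam h => (hproj lam h).2
  have hne : lam₁ ≠ lam₂ := ne_of_gt hlt
  have hδ : (0:ℝ) < lam₁ - lam₂ := sub_pos.2 hlt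
  -- exp formula
  have hU : ∀ t : ℝ, transU M t
      = ∑ lam ∈ S, Complex.exp (Complex.I * t * lam) • E lam := by
    intro t
    unfold transU
    rw [hdecomp, Finset.smul_sum]
    rw [Finset.sum_congr rfl (fun lam _ => smul_smul (Complex.I * (t:ℂ)) ((lam : ℝ) : ℂ) (E lam))]
    exact spectral_exp S E hidem horth hsum (fun lam => Complex.I * (t:ℂ) * (lam:ℂ))
  -- entries vanish off support
  have hzero : ∀ lam ∈ S, lam ≠ lam₁ → lam ≠ lam₂ → E lam u u = 0 := by
    intro lam hl hl1 hl2
    have hcol : E lam *ᵥ Pi.single u 1 = 0 := by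
      by_contra h
      rcases (hsupp lam hl).1 h with h' | h' <;> [exact hl1 h'; exact hl2 h']
    have := congr_fun hcol u
    simpa [Matrix.mulVec_single] using this
  -- reduce sums over S to the two terms
  have hpair : ∀ g : ℝ → ℂ, ∑ lam ∈ S, g lam * E lam u u
      = g lam₁ * E lam₁ u u + g lam₂ * E lam₂ u u := by
    intro g
    rw [← Finset.sum_subset (s₁ := ({lam₁, lam₂} : Finset ℝ))
      (by simp [Finset.insert_subset_iff, h1, h2])
      (fun x hxS hxn => by
        simp only [Finset.mem_insert, Finset.mem_singleton, not_or] at hxn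
        rw [hzero x hxS hxn.1 hxn.2, mul_zero])]
    rw [Finset.sum_pair hne]
  have hEuu : ∀ t : ℝ, transU M t u u
      = Complex.exp (Complex.I * t * lam₁) * E lam₁ u u
        + Complex.exp (Complex.I * t * lam₂) * E lam₂ u u := by
    intro t
    rw [hU t]
    have : (∑ lam ∈ S, Complex.exp (Complex.I * t * lam) • E lam) u u
        = ∑ lam ∈ S, Complex.exp (Complex.I * t * lam) * E lam u u := by
      simp [Matrix.sum_apply, Matrix.smul_apply, smul_eq_mul]
    rw [this, hpair]
  -- entries are (real) sums of normSq of the column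
  have hval : ∀ lam ∈ S, E lam u u = ((∑ j, Complex.normSq (E lam j u) : ℝ) : ℂ) := by
    intro lam hl
    have h := congr_fun (congr_fun (hidem lam hl) u) u
    have herm := (hproj lam hl).1
    calc E lam u u = ∑ j, E lam u j * E lam j u := by
          rw [← h]; simp [Matrix.mul_apply]
      _ = ∑ j, ((Complex.normSq (E lam j u) : ℝ) : ℂ) := by
          refine Finset.sum_congr rfl fun j _ => ?_
          have hc : star (E lam j u) = E lam u j := congr_fun (congr_fun herm u) j
          rw [← hc, Complex.star_def, ← Complex.normSq_eq_conj_mul_self]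
      _ = ((∑ j, Complex.normSq (E lam j u) : ℝ) : ℂ) := by push_cast; ring
  set α : ℝ := ∑ j, Complex.normSq (E lam₁ j u) with hα_def
  set β : ℝ := ∑ j, Complex.normSq (E lam₂ j u) with hβ_def
  have hpos : ∀ lam ∈ S, (lam = lam₁ ∨ lam = lam₂) →
      (0:ℝ) < ∑ j, Complex.normSq (E lam j u) := by
    intro lam hl hor
    have hcol : E lam *ᵥ Pi.single u 1 ≠ 0 := (hsupp lam hl).2 hor
    have hex : ∃ j, E lam j u ≠ 0 := by
      by_contra h
      push_neg at h
      exact hcol (funext fun j => by simp [Matrix.mulVec_single, h j])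
    obtain ⟨j, hj⟩ := hex
    exact Finset.sum_pos' (fun i _ => Complex.normSq_nonneg _)
      ⟨j, Finset.mem_univ j, Complex.normSq_pos.2 hj⟩
  have hα : 0 < α := hpos lam₁ h1 (Or.inl rfl)
  have hβ : 0 < β := hpos lam₂ h2 (Or.inr rfl)
  have hv1 : E lam₁ u u = (α : ℂ) := hval lam₁ h1
  have hv2 : E lam₂ u u = (β : ℂ) := hval lam₂ h2
  have hone : α + β = 1 := by
    have h := congr_fun (congr_fun hsum u) u
    have h' : (∑ lam ∈ S, E lam) u u = ∑ lam ∈ S, (1:ℂ) * E lam u u := by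
      simp [Matrix.sum_apply]
    rw [h', hpair] at h
    rw [hv1, hv2, one_mul, one_mul, Matrix.one_apply_eq] at h
    exact_mod_cast h
  have hform : ∀ t : ℝ, transU M t u u
      = Complex.exp (Complex.I * t * lam₂)
        * ((α:ℂ) * Complex.exp ((t * (lam₁ - lam₂) : ℝ) * Complex.I) + β) := by
    intro t
    rw [hEuu t, hv1, hv2]
    rw [show Complex.I * t * lam₁
        = Complex.I * t * lam₂ + (t * (lam₁ - lam₂) : ℝ) * Complex.I by push_cast; ring]
    rw [Complex.exp_add]
    ring
  have habs : ∀ t : ℝ, ‖transU M t u u‖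
      = ‖(α:ℂ) * Complex.exp ((t * (lam₁ - lam₂) : ℝ) * Complex.I) + β‖ := by
    intro t
    rw [hform t, norm_mul]
    rw [show Complex.I * t * lam₂ = ((t * lam₂ : ℝ) : ℂ) * Complex.I by push_cast; ring]
    rw [Complex.norm_exp_ofReal_mul_I, one_mul]
  constructor
  · rw [habs]
    rw [show (2 * Real.pi / (lam₁ - lam₂)) * (lam₁ - lam₂) = 2 * Real.pi from
      div_mul_cancel₀ _ (ne_of_gt hδ)]
    rw [show ((2 * Real.pi : ℝ) : ℂ) * Complex.I = 2 * Real.pi * Complex.I by push_cast; ring]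
    rw [Complex.exp_two_pi_mul_I, mul_one]
    rw [show (α:ℂ) + β = 1 by exact_mod_cast congrArg (Complex.ofReal) hone]
    exact norm_one
  · intro t ht htlt habs1
    set θ : ℝ := t * (lam₁ - lam₂) with hθ_def
    have hθpos : 0 < θ := mul_pos ht hδ
    have hθlt : θ < 2 * Real.pi := by
      rw [hθ_def]
      calc t * (lam₁ - lam₂) < (2 * Real.pi / (lam₁ - lam₂)) * (lam₁ - lam₂) := by
            exact mul_lt_mul_of_pos_right htlt hδ
        _ = 2 * Real.pi := div_mul_cancel₀ _ (ne_of_gt hδ)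
    have hcos : Real.cos θ < 1 := by
      rcases lt_or_eq_of_le (Real.cos_le_one θ) with h | h
      · exact h
      · exfalso
        have := (Real.cos_eq_one_iff_of_lt_of_lt
          (by linarith [Real.two_pi_pos]) hθlt).1 h
        linarith
    rw [habs t] at habs1
    have hsq : Complex.normSq ((α:ℂ) * Complex.exp ((θ:ℝ) * Complex.I) + β) = 1 := by
      rw [← Complex.sq_norm, habs1, one_pow]
    have hre : ((α:ℂ) * Complex.exp ((θ:ℝ) * Complex.I) + β).re
        = α * Real.cos θ + β := by
      simp [Complex.exp_ofReal_mul_I_re]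
    have him : ((α:ℂ) * Complex.exp ((θ:ℝ) * Complex.I) + β).im
        = α * Real.sin θ := by
      simp [Complex.exp_ofReal_mul_I_im]
    rw [Complex.normSq_apply, hre, him] at hsq
    have hsc : Real.sin θ ^ 2 + Real.cos θ ^ 2 = 1 := Real.sin_sq_add_cos_sq θ
    have hexp : α ^ 2 * (Real.sin θ ^ 2 + Real.cos θ ^ 2) = α ^ 2 := by rw [hsc]; ring
    have hone2 : (α + β) ^ 2 = 1 := by rw [hone]; exact one_pow 2
    nlinarith [hsq, hexp, hone2, mul_pos (mul_pos hα hβ) (sub_pos.2 hcos)]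
end

section
/- Let M be a real symmetric matrix and u an index whose eigenvalue support σ_u(M) has at least three elements. If u is periodic with minimum period ρ, and λ and μ are the largest and smallest eigenvalues in σ_u(M), then ρ > 2π/(λ - μ) (the general lower bound ρ ≥ 2π/(λ-μ) is attained if and only if |σ_u(M)| = 2). -/
open Matrix Complex

lemma exp_smul_idem_s11 {n : ℕ} (E : Matrix (Fin n) (Fin n) ℂ) (hE : E * E = E) (c : ℂ) :
    NormedSpace.exp (c • E) = 1 + (Complex.exp c - 1) • E := by
  have hpow : ∀ k : ℕ, E ^ (k + 1) = E := by
    intro k; induction k with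
    | zero => simp
    | succ k ih => rw [pow_succ, ih, hE]
  have hg : Summable (fun k : ℕ => ((k.factorial : ℂ))⁻¹ * c ^ k) := by
    simpa [smul_eq_mul] using NormedSpace.expSeries_summable' (𝕂 := ℂ) c
  have hexp : (∑' k : ℕ, ((k.factorial : ℂ))⁻¹ * c ^ k) = Complex.exp c := by
    rw [Complex.exp_eq_exp_ℂ, NormedSpace.exp_eq_tsum ℂ]
    simp [smul_eq_mul]
  have key : (fun k : ℕ => ((k.factorial : ℂ))⁻¹ • (c • E) ^ k)
      = fun k => (((k.factorial : ℂ))⁻¹ * c ^ k) • E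
          + (if k = 0 then (1 : Matrix (Fin n) (Fin n) ℂ) - E else 0) := by
    funext k
    cases k with
    | zero => simp
    | succ k => simp [smul_pow, hpow k, smul_smul]
  have hsingle : Summable (fun k : ℕ =>
      (if k = 0 then (1 : Matrix (Fin n) (Fin n) ℂ) - E else 0)) :=
    summable_of_ne_finset_zero (s := {0}) (by intro k hk; simp at hk; simp [hk])
  rw [NormedSpace.exp_eq_tsum ℂ]
  simp only []
  rw [key, Summable.tsum_add (hg.smul_const E) hsingle, Summable.tsum_smul_const hg, hexp, tsum_ite_eq,
    sub_smul, one_smul]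
  abel

lemma exp_orth_sum {n : ℕ} (s : Finset ℝ) (E : ℝ → Matrix (Fin n) (Fin n) ℂ) (c : ℝ → ℂ)
    (hidem : ∀ κ ∈ s, E κ * E κ = E κ)
    (horth : ∀ κ ∈ s, ∀ μ ∈ s, κ ≠ μ → E κ * E μ = 0) :
    NormedSpace.exp (∑ κ ∈ s, c κ • E κ)
      = 1 + ∑ κ ∈ s, (Complex.exp (c κ) - 1) • E κ := by
  classical
  induction s using Finset.induction with
  | empty => simp
  | @insert a t ha ih =>
    have hat : ∀ κ ∈ t, E a * E κ = 0 ∧ E κ * E a = 0 := by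
      intro κ hκ
      have hne : a ≠ κ := by rintro rfl; exact ha hκ
      exact ⟨horth a (Finset.mem_insert_self a t) κ (Finset.mem_insert_of_mem hκ) hne,
        horth κ (Finset.mem_insert_of_mem hκ) a (Finset.mem_insert_self a t) hne.symm⟩
    have hcomm : Commute (c a • E a) (∑ κ ∈ t, c κ • E κ) := by
      apply Commute.sum_right
      intro κ hκ
      show _ * _ = _ * _
      rw [Algebra.smul_mul_assoc, Algebra.mul_smul_comm, Algebra.smul_mul_assoc,
        Algebra.mul_smul_comm, (hat κ hκ).1, (hat κ hκ).2]
      simp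
    rw [Finset.sum_insert ha, Finset.sum_insert ha,
      Matrix.exp_add_of_commute _ _ hcomm,
      ih (fun κ hκ => hidem κ (Finset.mem_insert_of_mem hκ))
        (fun κ hκ μ hμ h => horth κ (Finset.mem_insert_of_mem hκ) μ (Finset.mem_insert_of_mem hμ) h),
      exp_smul_idem_s11 (E a) (hidem a (Finset.mem_insert_self a t)) (c a)]
    have hzero : (Complex.exp (c a) - 1) • E a * (∑ κ ∈ t, (Complex.exp (c κ) - 1) • E κ) = 0 := by
      rw [Finset.mul_sum]
      apply Finset.sum_eq_zero
      intro κ hκ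
      rw [Algebra.smul_mul_assoc, Algebra.mul_smul_comm, (hat κ hκ).1, smul_zero, smul_zero]
    rw [mul_add, add_mul, add_mul, mul_one, one_mul, hzero, mul_one]
    abel


lemma align (s : Finset ℝ) (r : ℝ → ℝ) (w : ℝ → ℂ) (z : ℂ)
    (hr : ∀ κ ∈ s, 0 ≤ r κ) (hw : ∀ κ ∈ s, ‖w κ‖ = 1)
    (hrsum : ∑ κ ∈ s, r κ = 1) (hz : z = ∑ κ ∈ s, (r κ : ℂ) * w κ)
    (habs : ‖z‖ = 1) :
    ∀ κ ∈ s, 0 < r κ → w κ = z := by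
  have hzz : ((starRingEnd ℂ) z * z).re = 1 := by
    rw [mul_comm, Complex.mul_conj]
    simp [← Complex.sq_norm, habs]
  have hsum : ∑ κ ∈ s, r κ * ((starRingEnd ℂ) z * w κ).re = 1 := by
    have : (starRingEnd ℂ) z * z = ∑ κ ∈ s, (r κ : ℂ) * ((starRingEnd ℂ) z * w κ) := by
      rw [hz, Finset.mul_sum]
      exact Finset.sum_congr rfl fun κ _ => by ring
    calc ∑ κ ∈ s, r κ * ((starRingEnd ℂ) z * w κ).re
        = ((starRingEnd ℂ) z * z).re := by
          rw [this, Complex.re_sum]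
          exact Finset.sum_congr rfl fun κ _ => (Complex.re_ofReal_mul _ _).symm
      _ = 1 := hzz
  have hle : ∀ κ ∈ s, r κ * ((starRingEnd ℂ) z * w κ).re ≤ r κ := by
    intro κ hκ
    have h1 : ((starRingEnd ℂ) z * w κ).re ≤ 1 := by
      calc ((starRingEnd ℂ) z * w κ).re ≤ ‖(starRingEnd ℂ) z * w κ‖ :=
            Complex.re_le_norm _
        _ = 1 := by rw [norm_mul, Complex.norm_conj, habs, hw κ hκ, one_mul]
    calc r κ * ((starRingEnd ℂ) z * w κ).re ≤ r κ * 1 :=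
          mul_le_mul_of_nonneg_left h1 (hr κ hκ)
      _ = r κ := mul_one _
  have heq : ∀ κ ∈ s, r κ * ((starRingEnd ℂ) z * w κ).re = r κ := by
    have := (Finset.sum_eq_sum_iff_of_le hle).mp (by rw [hsum, hrsum])
    exact this
  intro κ hκ hpos
  have hre : ((starRingEnd ℂ) z * w κ).re = 1 := by
    exact mul_left_cancel₀ (ne_of_gt hpos) (by rw [heq κ hκ, mul_one])
  have habs2 : ‖(starRingEnd ℂ) z * w κ‖ = 1 := by
    rw [norm_mul, Complex.norm_conj, habs, hw κ hκ, one_mul]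
  have him : ((starRingEnd ℂ) z * w κ).im = 0 := by
    have h := Complex.sq_norm ((starRingEnd ℂ) z * w κ)
    rw [habs2, Complex.normSq_apply, hre] at h
    nlinarith [h]
  have hone : (starRingEnd ℂ) z * w κ = 1 := by
    apply Complex.ext <;> simp [hre, him]
  have : z * ((starRingEnd ℂ) z * w κ) = z * 1 := by rw [hone]
  rw [← mul_assoc, Complex.mul_conj, ← Complex.sq_norm, habs, mul_one] at this
  simpa using this

theorem stmt11 {n : ℕ} (M : Matrix (Fin n) (Fin n) ℝ) (hM : M.IsSymm)
    (S : Finset ℝ) (E : ℝ → Matrix (Fin n) (Fin n) ℂ)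
    (hSE : IsSpectralDecompOf M S E) (u : Fin n)
    -- the eigenvalue support of `u` has at least three elements
    (lam₁ lam₂ lam₃ : ℝ) (h1 : lam₁ ∈ S) (h2 : lam₂ ∈ S) (h3 : lam₃ ∈ S)
    (hne12 : lam₁ ≠ lam₂) (hne13 : lam₁ ≠ lam₃) (hne23 : lam₂ ≠ lam₃)
    (hs1 : E lam₁ *ᵥ Pi.single u 1 ≠ 0) (hs2 : E lam₂ *ᵥ Pi.single u 1 ≠ 0)
    (hs3 : E lam₃ *ᵥ Pi.single u 1 ≠ 0)
    -- `lam` and `mu` are the largest and smallest eigenvalues in the support of `u`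
    (lam mu : ℝ) (hlam : lam ∈ S) (hmu : mu ∈ S)
    (hslam : E lam *ᵥ Pi.single u 1 ≠ 0) (hsmu : E mu *ᵥ Pi.single u 1 ≠ 0)
    (hminmax : ∀ kap ∈ S, E kap *ᵥ Pi.single u 1 ≠ 0 → mu ≤ kap ∧ kap ≤ lam)
    -- `u` is periodic with minimum period `ρ`
    (ρ : ℝ) (hρpos : 0 < ρ) (hper : ‖transU M ρ u u‖ = 1)
    (hmin : ∀ t : ℝ, 0 < t → ‖transU M t u u‖ = 1 → ρ ≤ t) :
    ρ > 2 * Real.pi / (lam - mu) := by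
  obtain ⟨hHP, horth, hsum1, hMdec⟩ := hSE
  set r : ℝ → ℝ := fun κ => ∑ j, Complex.normSq (E κ j u) with hr_def
  have hdiag : ∀ κ ∈ S, E κ u u = (r κ : ℂ) := by
    intro κ hκ
    have hid := (hHP κ hκ).2
    have hherm := (hHP κ hκ).1
    have h0 : E κ u u = (E κ * E κ) u u := by rw [hid]
    rw [h0, Matrix.mul_apply, hr_def]
    push_cast
    apply Finset.sum_congr rfl
    intro j _
    rw [← hherm.apply u j, Complex.star_def, Complex.normSq_eq_conj_mul_self]
  have hrnn : ∀ κ, 0 ≤ r κ := fun κ =>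
    Finset.sum_nonneg fun j _ => Complex.normSq_nonneg _
  have hsupp : ∀ κ, E κ *ᵥ Pi.single u 1 ≠ 0 → 0 < r κ := by
    intro κ hκ
    rcases (hrnn κ).lt_or_eq with h | h
    · exact h
    · exfalso
      apply hκ
      have hz : ∀ j, Complex.normSq (E κ j u) = 0 := by
        intro j
        exact (Finset.sum_eq_zero_iff_of_nonneg
          (fun j _ => Complex.normSq_nonneg (E κ j u))).mp h.symm j (Finset.mem_univ j)
      funext j
      simp only [Matrix.mulVec_single, mul_one, Pi.zero_apply]
      simpa using Complex.normSq_eq_zero.mp (hz j)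
  have hrsum : ∑ κ ∈ S, r κ = 1 := by
    have h := congrArg (fun A : Matrix (Fin n) (Fin n) ℂ => A u u) hsum1
    simp only [Matrix.sum_apply, Matrix.one_apply_eq] at h
    rw [Finset.sum_congr rfl (fun κ hκ => hdiag κ hκ)] at h
    exact_mod_cast h
  have hU : transU M ρ = 1 + ∑ κ ∈ S, (Complex.exp (((ρ * κ : ℝ) : ℂ) * Complex.I) - 1) • E κ := by
    rw [transU, hMdec, Finset.smul_sum]
    have h1 : ∀ κ ∈ S, (Complex.I * (ρ : ℂ)) • ((κ : ℂ) • E κ)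
        = (((ρ * κ : ℝ) : ℂ) * Complex.I) • E κ := by
      intro κ _
      rw [smul_smul]
      congr 1
      push_cast
      ring
    rw [Finset.sum_congr rfl h1,
      exp_orth_sum S E (fun κ => ((ρ * κ : ℝ) : ℂ) * Complex.I)
        (fun κ hκ => (hHP κ hκ).2) horth]
  have hzval : transU M ρ u u
      = ∑ κ ∈ S, (r κ : ℂ) * Complex.exp (((ρ * κ : ℝ) : ℂ) * Complex.I) := by
    have h := congrArg (fun A : Matrix (Fin n) (Fin n) ℂ => A u u) hU
    simp only [Matrix.add_apply, Matrix.one_apply_eq, Matrix.sum_apply,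
      Matrix.smul_apply, smul_eq_mul] at h
    have h2 : ∑ κ ∈ S, (Complex.exp (((ρ * κ : ℝ) : ℂ) * Complex.I) - 1) * E κ u u
        = ∑ κ ∈ S, (Complex.exp (((ρ * κ : ℝ) : ℂ) * Complex.I) - 1) * (r κ : ℂ) :=
      Finset.sum_congr rfl fun κ hκ => by rw [hdiag κ hκ]
    rw [h, h2]
    have hexpand : ∑ κ ∈ S, (Complex.exp (((ρ * κ : ℝ) : ℂ) * Complex.I) - 1) * (r κ : ℂ)
        = ∑ κ ∈ S, (r κ : ℂ) * Complex.exp (((ρ * κ : ℝ) : ℂ) * Complex.I)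
          - ∑ κ ∈ S, (r κ : ℂ) := by
      rw [← Finset.sum_sub_distrib]
      exact Finset.sum_congr rfl fun κ _ => by ring
    rw [hexpand]
    have h3 : (∑ κ ∈ S, (r κ : ℂ)) = 1 := by exact_mod_cast hrsum
    rw [h3]
    ring
  have halign : ∀ κ ∈ S, 0 < r κ →
      Complex.exp (((ρ * κ : ℝ) : ℂ) * Complex.I) = transU M ρ u u :=
    align S r (fun κ => Complex.exp (((ρ * κ : ℝ) : ℂ) * Complex.I)) (transU M ρ u u)
      (fun κ _ => hrnn κ) (fun κ _ => Complex.norm_exp_ofReal_mul_I _) hrsum hzval hper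
  have key : ∀ κ ∈ S, ∀ κ' ∈ S, E κ *ᵥ Pi.single u 1 ≠ 0 →
      E κ' *ᵥ Pi.single u 1 ≠ 0 → κ' < κ → 2 * Real.pi ≤ ρ * (κ - κ') := by
    intro κ hκ κ' hκ' hsκ hsκ' hlt
    have ha : Complex.exp (((ρ * κ : ℝ) : ℂ) * Complex.I) = transU M ρ u u :=
      halign κ hκ (hsupp κ hsκ)
    have hb : Complex.exp (((ρ * κ' : ℝ) : ℂ) * Complex.I) = transU M ρ u u :=
      halign κ' hκ' (hsupp κ' hsκ')
    have heq : Complex.exp (((ρ * κ : ℝ) : ℂ) * Complex.I)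
        = Complex.exp (((ρ * κ' : ℝ) : ℂ) * Complex.I) := ha.trans hb.symm
    have hdiv : Complex.exp (((ρ * κ : ℝ) : ℂ) * Complex.I
        - ((ρ * κ' : ℝ) : ℂ) * Complex.I) = 1 := by
      rw [Complex.exp_sub, heq]
      exact div_self (Complex.exp_ne_zero _)
    rw [Complex.exp_eq_one_iff] at hdiv
    obtain ⟨m, hm⟩ := hdiv
    have him := congrArg Complex.im hm
    simp only [Complex.sub_im, Complex.mul_im, Complex.I_im, Complex.I_re,
      Complex.ofReal_re, Complex.ofReal_im, Complex.intCast_re, Complex.intCast_im,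
      Complex.mul_re, Complex.re_ofNat, Complex.im_ofNat] at him
    ring_nf at him
    -- him should say ρ * κ - ρ * κ' = m * (2 * π) in some normal form
    have him' : ρ * κ - ρ * κ' = (m : ℝ) * (2 * Real.pi) := by linarith [him]
    have hpos : (0 : ℝ) < (m : ℝ) * (2 * Real.pi) := by
      rw [← him']
      nlinarith
    have hmpos : (0 : ℤ) < m := by
      by_contra hle
      push_neg at hle
      have : ((m : ℝ)) ≤ 0 := by exact_mod_cast hle
      nlinarith [Real.pi_pos]
    have hm1 : (1 : ℝ) ≤ (m : ℝ) := by exact_mod_cast hmpos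
    nlinarith [Real.pi_pos]
  obtain ⟨ν, hνS, hνsup, hνlam, hνmu⟩ :
      ∃ ν, ν ∈ S ∧ E ν *ᵥ Pi.single u 1 ≠ 0 ∧ ν ≠ lam ∧ ν ≠ mu := by
    rcases eq_or_ne lam₁ lam with h1l | h1l
    · rcases eq_or_ne lam₂ mu with h2m | h2m
      · exact ⟨lam₃, h3, hs3, by rw [← h1l]; exact hne13.symm,
          by rw [← h2m]; exact hne23.symm⟩
      · exact ⟨lam₂, h2, hs2, by rw [← h1l]; exact hne12.symm, h2m⟩
    · rcases eq_or_ne lam₁ mu with h1m | h1m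
      · rcases eq_or_ne lam₂ lam with h2l | h2l
        · exact ⟨lam₃, h3, hs3, by rw [← h2l]; exact hne23.symm,
            by rw [← h1m]; exact hne13.symm⟩
        · exact ⟨lam₂, h2, hs2, h2l, by rw [← h1m]; exact hne12.symm⟩
      · exact ⟨lam₁, h1, hs1, h1l, h1m⟩
  have hbounds := hminmax ν hνS hνsup
  have hνlt : ν < lam := lt_of_le_of_ne hbounds.2 hνlam
  have hνgt : mu < ν := lt_of_le_of_ne hbounds.1 (Ne.symm hνmu)
  have k1 := key lam hlam ν hνS hslam hνsup hνlt
  have k2 := key ν hνS mu hmu hνsup hsmu hνgt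
  have hlm : mu < lam := hνgt.trans hνlt
  rw [gt_iff_lt, div_lt_iff₀ (by linarith)]
  have hsplit : ρ * (lam - mu) = ρ * (lam - ν) + ρ * (ν - mu) := by ring
  have hpi := Real.pi_pos
  linarith
end

section
/- Let M be a real symmetric matrix and u, v indices with the same eigenvalue support σ_u(M) = σ_v(M). Then u is periodic if and only if v is periodic; moreover, if both are periodic, they have the same minimum period. -/
open Matrix Complex

section aux
open NormedSpace

variable {n : ℕ}

lemma pow_spectral (S : Finset ℝ) (E : ℝ → Matrix (Fin n) (Fin n) ℂ)
    (hidem : ∀ lam ∈ S, E lam * E lam = E lam)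
    (horth : ∀ lam ∈ S, ∀ mu ∈ S, lam ≠ mu → E lam * E mu = 0)
    (c : ℝ → ℂ) (k : ℕ) :
    (∑ lam ∈ S, c lam • E lam) ^ (k + 1) = ∑ lam ∈ S, (c lam) ^ (k + 1) • E lam := by
  induction k with
  | zero => simp
  | succ k ih =>
    rw [pow_succ, ih, Finset.sum_mul_sum]
    refine Finset.sum_congr rfl fun lam hlam => ?_
    rw [Finset.sum_eq_single_of_mem lam hlam]
    · rw [smul_mul_smul_comm, hidem lam hlam, ← pow_succ]
    · intro mu hmu hne
      rw [smul_mul_smul_comm, horth lam hlam mu hmu hne.symm, smul_zero]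

lemma summable_expshift (c : ℂ) :
    Summable fun k : ℕ => (((k+1).factorial : ℂ))⁻¹ * c ^ (k+1) := by
  have h0 : Summable fun k : ℕ => ((k.factorial : ℂ))⁻¹ * c ^ k := by
    simpa [smul_eq_mul] using expSeries_summable' (𝕂 := ℂ) c
  have := (summable_nat_add_iff (f := fun k : ℕ => ((k.factorial : ℂ))⁻¹ * c ^ k) 1).mpr h0
  simpa using this

lemma tsum_expshift (c : ℂ) :
    (∑' k : ℕ, (((k+1).factorial : ℂ))⁻¹ * c ^ (k+1)) = Complex.exp c - 1 := by
  have h0 : Summable fun k : ℕ => ((k.factorial : ℂ))⁻¹ * c ^ k := by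
    simpa [smul_eq_mul] using expSeries_summable' (𝕂 := ℂ) c
  have h1 : Complex.exp c = ∑' k : ℕ, ((k.factorial : ℂ))⁻¹ * c ^ k := by
    rw [Complex.exp_eq_exp_ℂ, exp_eq_tsum ℂ]
    exact tsum_congr fun k => (smul_eq_mul _ _).symm
  rw [Summable.tsum_eq_zero_add h0] at h1
  simp only [pow_zero, Nat.factorial_zero, Nat.cast_one, inv_one, mul_one] at h1
  rw [eq_sub_iff_add_eq, h1]
  ring

lemma exp_spectral (S : Finset ℝ) (E : ℝ → Matrix (Fin n) (Fin n) ℂ)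
    (hidem : ∀ lam ∈ S, E lam * E lam = E lam)
    (horth : ∀ lam ∈ S, ∀ mu ∈ S, lam ≠ mu → E lam * E mu = 0)
    (hone : (∑ lam ∈ S, E lam) = 1) (c : ℝ → ℂ) :
    exp (∑ lam ∈ S, c lam • E lam) = ∑ lam ∈ S, Complex.exp (c lam) • E lam := by
  letI : SeminormedRing (Matrix (Fin n) (Fin n) ℂ) := Matrix.linftyOpSemiNormedRing
  letI : NormedRing (Matrix (Fin n) (Fin n) ℂ) := Matrix.linftyOpNormedRing
  letI : NormedAlgebra ℂ (Matrix (Fin n) (Fin n) ℂ) := Matrix.linftyOpNormedAlgebra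
  set A := ∑ lam ∈ S, c lam • E lam with hA
  have hsum : Summable fun k : ℕ => (((k).factorial : ℂ)⁻¹) • A ^ k := expSeries_summable' A
  have hexp : exp A = ∑' k : ℕ, ((k).factorial : ℂ)⁻¹ • A ^ k := by rw [exp_eq_tsum ℂ]
  rw [hexp, Summable.tsum_eq_zero_add hsum]
  have hpow : ∀ k : ℕ, ((((k+1).factorial) : ℂ)⁻¹) • A ^ (k+1)
      = ∑ lam ∈ S, (((((k+1).factorial) : ℂ)⁻¹) * c lam ^ (k+1)) • E lam := by
    intro k
    rw [pow_spectral S E hidem horth c k, Finset.smul_sum]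
    exact Finset.sum_congr rfl fun lam _ => smul_smul _ _ _
  rw [tsum_congr hpow]
  have hsc : ∀ lam : ℝ, Summable fun k : ℕ => ((((k+1).factorial) : ℂ)⁻¹) * c lam ^ (k+1) :=
    fun lam => summable_expshift (c lam)
  rw [Summable.tsum_finsetSum (fun lam _ => (hsc lam).smul_const (E lam))]
  have : ∀ lam ∈ S, (∑' k : ℕ, (((((k+1).factorial) : ℂ)⁻¹) * c lam ^ (k+1)) • E lam)
      = (Complex.exp (c lam) - 1) • E lam := by
    intro lam _
    rw [Summable.tsum_smul_const (hsc lam), tsum_expshift (c lam)]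
  rw [Finset.sum_congr rfl this]
  simp only [pow_zero, Nat.factorial_zero, Nat.cast_one, inv_one, one_smul]
  simp only [sub_smul, one_smul, Finset.sum_sub_distrib, hone]
  abel

end aux

lemma complex_eq_one_of_re_abs (z : ℂ) (habs : ‖z‖ = 1) (hre : z.re = 1) : z = 1 := by
  have h1 : z.re ^ 2 + z.im ^ 2 = 1 := by
    have := Complex.sq_norm z
    rw [habs, Complex.normSq_apply] at this
    nlinarith
  have him : z.im = 0 := by nlinarith
  exact Complex.ext (by simp [hre]) (by simp [him])

lemma abs_convex_unimodular (S : Finset ℝ) (p : ℝ → ℝ) (z : ℝ → ℂ)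
    (hp : ∀ l ∈ S, 0 ≤ p l) (hsum : ∑ l ∈ S, p l = 1)
    (hz : ∀ l ∈ S, ‖z l‖ = 1) :
    ‖∑ l ∈ S, (p l : ℂ) * z l‖ = 1 ↔
      ∀ l ∈ S, ∀ m ∈ S, p l ≠ 0 → p m ≠ 0 → z l = z m := by
  constructor
  · intro habs l hl m hm hpl hpm
    set w := ∑ l ∈ S, (p l : ℂ) * z l with hw
    have hww : w * (starRingEnd ℂ) w = 1 := by
      rw [Complex.mul_conj]
      rw [← Complex.sq_norm, habs]
      norm_num
    have key : ∀ l ∈ S, p l ≠ 0 → z l = w := by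
      intro l hl hpl
      have h2 : (∑ l ∈ S, (p l : ℂ) * z l * (starRingEnd ℂ) w) = 1 := by
        rw [← Finset.sum_mul, ← hw, hww]
      have h3 : (∑ l ∈ S, ((p l : ℂ) * z l * (starRingEnd ℂ) w)).re = 1 := by rw [h2]; simp
      rw [Complex.re_sum] at h3
      have h4 : ∀ l ∈ S, ((p l : ℂ) * z l * (starRingEnd ℂ) w).re
          = p l * (z l * (starRingEnd ℂ) w).re := by
        intro l hl
        rw [mul_assoc, Complex.re_ofReal_mul]
      rw [Finset.sum_congr rfl h4] at h3
      have h1 : ∑ l ∈ S, p l * (1 - (z l * (starRingEnd ℂ) w).re) = 0 := by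
        simp only [mul_sub, mul_one, Finset.sum_sub_distrib, hsum, h3, sub_self]
      have habsw : ∀ l ∈ S, ‖z l * (starRingEnd ℂ) w‖ = 1 := by
        intro l hl
        rw [norm_mul, hz l hl, Complex.norm_conj, habs, one_mul]
      have hnn : ∀ l ∈ S, 0 ≤ p l * (1 - (z l * (starRingEnd ℂ) w).re) := by
        intro l hl
        apply mul_nonneg (hp l hl)
        have h5 := Complex.re_le_norm (z l * (starRingEnd ℂ) w)
        rw [habsw l hl] at h5
        linarith
      have h6 := (Finset.sum_eq_zero_iff_of_nonneg hnn).mp h1 l hl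
      have hre : (z l * (starRingEnd ℂ) w).re = 1 := by
        rcases mul_eq_zero.mp h6 with h | h
        · exact absurd h hpl
        · linarith
      have h7 : z l * (starRingEnd ℂ) w = 1 :=
        complex_eq_one_of_re_abs _ (habsw l hl) hre
      calc z l = z l * ((starRingEnd ℂ) w * w) := by rw [mul_comm ((starRingEnd ℂ) w) w, hww, mul_one]
        _ = (z l * (starRingEnd ℂ) w) * w := by ring
        _ = w := by rw [h7, one_mul]
    rw [key l hl hpl, key m hm hpm]
  · intro hconst
    have hex : ∃ l ∈ S, p l ≠ 0 := by
      by_contra h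
      push_neg at h
      rw [Finset.sum_eq_zero h] at hsum
      norm_num at hsum
    obtain ⟨l0, hl0, hpl0⟩ := hex
    have heq : ∑ l ∈ S, (p l : ℂ) * z l = z l0 := by
      have h1 : ∀ l ∈ S, (p l : ℂ) * z l = (p l : ℂ) * z l0 := by
        intro l hl
        by_cases h : p l = 0
        · simp [h]
        · rw [hconst l hl l0 hl0 h hpl0]
      rw [Finset.sum_congr rfl h1, ← Finset.sum_mul]
      have : (∑ l ∈ S, (p l : ℂ)) = 1 := by
        rw [← Complex.ofReal_sum, hsum, Complex.ofReal_one]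
      rw [this, one_mul]
    rw [heq, hz l0 hl0]

lemma diag_entry_eq {n : ℕ} (E : Matrix (Fin n) (Fin n) ℂ)
    (hherm : E.IsHermitian) (hidem : E * E = E) (u : Fin n) :
    E u u = ((∑ j, Complex.normSq (E j u) : ℝ) : ℂ) := by
  conv_lhs => rw [← hidem]
  rw [Matrix.mul_apply, Complex.ofReal_sum]
  refine Finset.sum_congr rfl fun j _ => ?_
  rw [← hherm.apply j u, Complex.normSq_eq_conj_mul_self]
  simp [Complex.star_def]

lemma vec_ne_zero_iff {n : ℕ} (E : Matrix (Fin n) (Fin n) ℂ) (u : Fin n) :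
    E *ᵥ Pi.single u 1 ≠ 0 ↔ (∑ j, Complex.normSq (E j u) : ℝ) ≠ 0 := by
  rw [Matrix.mulVec_single_one]
  constructor
  · intro h hc
    apply h
    have h0 : ∀ j, Complex.normSq (E j u) = 0 := by
      intro j
      have := Finset.sum_eq_zero_iff_of_nonneg
        (fun j (_ : j ∈ Finset.univ) => Complex.normSq_nonneg (E j u)) |>.mp hc j (Finset.mem_univ j)
      exact this
    funext j
    exact Complex.normSq_eq_zero.mp (h0 j)
  · intro h hc
    apply h
    apply Finset.sum_eq_zero
    intro j _
    rw [show E j u = 0 from congrFun hc j, Complex.normSq_zero]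


lemma transU_abs_one_iff {n : ℕ} (M : Matrix (Fin n) (Fin n) ℝ)
    (S : Finset ℝ) (E : ℝ → Matrix (Fin n) (Fin n) ℂ)
    (hSE : IsSpectralDecompOf M S E) (u : Fin n) (t : ℝ) :
    ‖transU M t u u‖ = 1 ↔
      ∀ lam ∈ S, ∀ mu ∈ S, E lam *ᵥ Pi.single u 1 ≠ 0 → E mu *ᵥ Pi.single u 1 ≠ 0 →
        Complex.exp (Complex.I * t * lam) = Complex.exp (Complex.I * t * mu) := by
  obtain ⟨h1, h2, h3, h4⟩ := hSE
  have hexp : transU M t = ∑ lam ∈ S, Complex.exp (Complex.I * t * lam) • E lam := by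
    unfold transU
    rw [h4, Finset.smul_sum]
    simp_rw [smul_smul]
    exact exp_spectral S E (fun l hl => (h1 l hl).2) h2 h3 _
  set p : ℝ → ℝ := fun lam => ∑ j, Complex.normSq (E lam j u) with hp
  have hdentry : transU M t u u
      = ∑ lam ∈ S, (p lam : ℂ) * Complex.exp (Complex.I * t * lam) := by
    rw [hexp, Matrix.sum_apply]
    refine Finset.sum_congr rfl fun lam hlam => ?_
    rw [Matrix.smul_apply, diag_entry_eq (E lam) (h1 lam hlam).1 (h1 lam hlam).2 u,
      smul_eq_mul]
    ring
  have hpn : ∀ lam ∈ S, 0 ≤ p lam :=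
    fun lam _ => Finset.sum_nonneg fun j _ => Complex.normSq_nonneg _
  have hpsum : ∑ lam ∈ S, p lam = 1 := by
    have h5 : (∑ lam ∈ S, E lam) u u = 1 := by rw [h3, Matrix.one_apply_eq]
    rw [Matrix.sum_apply] at h5
    rw [Finset.sum_congr rfl
      (fun lam hlam => diag_entry_eq (E lam) (h1 lam hlam).1 (h1 lam hlam).2 u)] at h5
    rw [← Complex.ofReal_sum] at h5
    exact_mod_cast h5
  have hz : ∀ lam ∈ S, ‖Complex.exp (Complex.I * t * lam)‖ = 1 := by
    intro lam _
    rw [show Complex.I * t * lam = ((t * lam : ℝ) : ℂ) * Complex.I by push_cast; ring]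
    exact Complex.norm_exp_ofReal_mul_I _
  rw [hdentry, abs_convex_unimodular S p _ hpn hpsum hz]
  constructor
  · intro h lam hlam mu hmu hvl hvm
    exact h lam hlam mu hmu ((vec_ne_zero_iff _ u).mp hvl) ((vec_ne_zero_iff _ u).mp hvm)
  · intro h lam hlam mu hmu hvl hvm
    exact h lam hlam mu hmu ((vec_ne_zero_iff _ u).mpr hvl) ((vec_ne_zero_iff _ u).mpr hvm)

theorem stmt12 {n : ℕ} (M : Matrix (Fin n) (Fin n) ℝ) (hM : M.IsSymm)
    (S : Finset ℝ) (E : ℝ → Matrix (Fin n) (Fin n) ℂ)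
    (hSE : IsSpectralDecompOf M S E) (u v : Fin n)
    -- `u` and `v` have the same eigenvalue support
    (hsupp : ∀ lam ∈ S, (E lam *ᵥ Pi.single u 1 ≠ 0 ↔ E lam *ᵥ Pi.single v 1 ≠ 0)) :
    ((∃ τ : ℝ, 0 < τ ∧ ‖transU M τ u u‖ = 1) ↔
      (∃ τ : ℝ, 0 < τ ∧ ‖transU M τ v v‖ = 1)) ∧
    ∀ ρ : ℝ,
      ((0 < ρ ∧ ‖transU M ρ u u‖ = 1 ∧
          ∀ t : ℝ, 0 < t → ‖transU M t u u‖ = 1 → ρ ≤ t) ↔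
        (0 < ρ ∧ ‖transU M ρ v v‖ = 1 ∧
          ∀ t : ℝ, 0 < t → ‖transU M t v v‖ = 1 → ρ ≤ t)) := by
  have hiff : ∀ t : ℝ, ‖transU M t u u‖ = 1 ↔ ‖transU M t v v‖ = 1 := by
    intro t
    rw [transU_abs_one_iff M S E hSE u t, transU_abs_one_iff M S E hSE v t]
    constructor
    · intro h lam hlam mu hmu hvl hvm
      exact h lam hlam mu hmu ((hsupp lam hlam).mpr hvl) ((hsupp mu hmu).mpr hvm)
    · intro h lam hlam mu hmu hvl hvm
      exact h lam hlam mu hmu ((hsupp lam hlam).mp hvl) ((hsupp mu hmu).mp hvm)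
  constructor
  · exact ⟨fun ⟨τ, ht, h2⟩ => ⟨τ, ht, (hiff τ).mp h2⟩,
      fun ⟨τ, ht, h2⟩ => ⟨τ, ht, (hiff τ).mpr h2⟩⟩
  · intro ρ
    constructor
    · rintro ⟨hρ, h2, h3⟩
      exact ⟨hρ, (hiff ρ).mp h2, fun t ht habs => h3 t ht ((hiff t).mpr habs)⟩
    · rintro ⟨hρ, h2, h3⟩
      exact ⟨hρ, (hiff ρ).mpr h2, fun t ht habs => h3 t ht ((hiff t).mp habs)⟩
end

section
/- Let M be a real symmetric matrix and u, v strongly cospectral indices that exhibit fractional revival at some time τ (U(τ)e_u = αe_u + βe_v with |α|² + |β|² = 1). If σ_u⁺(M) = {λ₁,...,λ_r} with r ≥ 2, then (λ₁ - λ_j)/(λ₁ - λ₂) ∈ ℚ for every j ≥ 2. -/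
open Matrix Complex

lemma mul_exp_of_mul_eq_smul {n : ℕ} (B A : Matrix (Fin n) (Fin n) ℂ) (c : ℂ)
    (h : B * A = c • B) : B * NormedSpace.exp A = Complex.exp c • B := by
  letI : SeminormedRing (Matrix (Fin n) (Fin n) ℂ) := Matrix.linftyOpSemiNormedRing
  letI : NormedRing (Matrix (Fin n) (Fin n) ℂ) := Matrix.linftyOpNormedRing
  letI : NormedAlgebra ℂ (Matrix (Fin n) (Fin n) ℂ) := Matrix.linftyOpNormedAlgebra
  have hpow : ∀ k : ℕ, B * A ^ k = c ^ k • B := by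
    intro k
    induction k with
    | zero => simp
    | succ k ih =>
      rw [pow_succ, ← mul_assoc, ih, smul_mul_assoc, h, smul_smul, ← pow_succ]
  have hs : Summable (fun k : ℕ => ((Nat.factorial k : ℂ))⁻¹ • A ^ k) :=
    NormedSpace.expSeries_summable' A
  have hsc : Summable (fun k : ℕ => ((Nat.factorial k : ℂ))⁻¹ * c ^ k) := by
    simpa [smul_eq_mul] using NormedSpace.expSeries_summable' (𝕂 := ℂ) c
  rw [NormedSpace.exp_eq_tsum (𝕂 := ℂ), ← hs.tsum_mul_left B]
  have : ∀ k : ℕ, B * (((Nat.factorial k : ℂ))⁻¹ • A ^ k)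
      = (((Nat.factorial k : ℂ))⁻¹ * c ^ k) • B := by
    intro k
    rw [mul_smul_comm, hpow, smul_smul]
  rw [tsum_congr this, hsc.tsum_smul_const, Complex.exp_eq_exp_ℂ, NormedSpace.exp_eq_tsum (𝕂 := ℂ)]
  simp [smul_eq_mul]


theorem stmt18 {n : ℕ} (M : Matrix (Fin n) (Fin n) ℝ) (hM : M.IsSymm)
    (S : Finset ℝ) (E : ℝ → Matrix (Fin n) (Fin n) ℂ)
    (hSE : IsSpectralDecompOf M S E) (u v : Fin n) (huv : u ≠ v)
    -- `u` and `v` are strongly cospectral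
    (hsc : ∀ mu ∈ S, E mu *ᵥ Pi.single u 1 = E mu *ᵥ Pi.single v 1 ∨
      E mu *ᵥ Pi.single u 1 = -(E mu *ᵥ Pi.single v 1))
    (r : ℕ) (hr : 2 ≤ r) (lam : Fin r → ℝ) (hinj : Function.Injective lam)
    (hlamS : ∀ j, lam j ∈ S)
    -- σ_u⁺(M) ⊇ {lam 1, ..., lam r}
    (hplus : ∀ j, E (lam j) *ᵥ Pi.single u 1 = E (lam j) *ᵥ Pi.single v 1 ∧
      E (lam j) *ᵥ Pi.single u 1 ≠ 0)
    -- fractional revival at time τ > 0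
    (τ : ℝ) (hτ : 0 < τ)
    (hFR : ∃ α β : ℂ,
      ‖α‖ ^ 2 + ‖β‖ ^ 2 = 1 ∧
      transU M τ *ᵥ Pi.single u 1 =
        α • (Pi.single u 1 : Fin n → ℂ) + β • (Pi.single v 1 : Fin n → ℂ)) :
    ∀ j : Fin r, ∃ q : ℚ,
      lam ⟨0, by omega⟩ - lam j =
        (q : ℝ) * (lam ⟨0, by omega⟩ - lam ⟨1, by omega⟩) := by
  obtain ⟨hproj, horth, hsum1, hdecomp⟩ := hSE
  obtain ⟨α, β, hab, hUe⟩ := hFR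
  -- Step A: E μ * A = (I τ μ) • E μ
  have hEA : ∀ μ ∈ S, E μ * ((Complex.I * (τ : ℂ)) • M.map (fun x => (x : ℂ)))
      = (Complex.I * τ * μ) • E μ := by
    intro μ hμ
    rw [hdecomp, mul_smul_comm, Finset.mul_sum]
    rw [Finset.sum_eq_single μ]
    · rw [mul_smul_comm, (hproj μ hμ).2, smul_smul]
    · intro b hb hne
      rw [mul_smul_comm, horth μ hμ b hb (Ne.symm hne), smul_zero]
    · intro h; exact absurd hμ h
  have hEU : ∀ μ ∈ S, E μ * transU M τ = Complex.exp (Complex.I * τ * μ) • E μ := by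
    intro μ hμ
    exact mul_exp_of_mul_eq_smul _ _ _ (hEA μ hμ)
  -- Step B: value equation
  have hval : ∀ j : Fin r, Complex.exp (Complex.I * τ * lam j) = α + β := by
    intro j
    have h1 := congrArg (fun A => A *ᵥ (Pi.single u 1 : Fin n → ℂ))
      (hEU (lam j) (hlamS j))
    simp only [← mulVec_mulVec, smul_mulVec] at h1
    rw [hUe, mulVec_add, mulVec_smul, mulVec_smul, ← (hplus j).1] at h1
    have h2 : (Complex.exp (Complex.I * τ * lam j) - (α + β))
        • (E (lam j) *ᵥ (Pi.single u 1 : Fin n → ℂ)) = 0 := by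
      rw [sub_smul, add_smul, h1]
      abel
    rcases smul_eq_zero.mp h2 with h3 | h3
    · exact sub_eq_zero.mp h3
    · exact absurd h3 (hplus j).2
  -- Step C: exp equal on all eigenvalues ⇒ integer relations
  have hk : ∀ j : Fin r, ∃ k : ℤ, τ * (lam ⟨0, by omega⟩ - lam j) = k * (2 * Real.pi) := by
    intro j
    have he : Complex.exp (Complex.I * τ * lam ⟨0, by omega⟩)
        = Complex.exp (Complex.I * τ * lam j) := by
      rw [hval ⟨0, by omega⟩, hval j]
    obtain ⟨k, hk⟩ := (Complex.exp_eq_exp_iff_exists_int).mp he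
    refine ⟨k, ?_⟩
    have him := congrArg Complex.im hk
    simp [Complex.add_im, Complex.mul_im, Complex.mul_re] at him
    push_cast at him ⊢
    nlinarith [him]
  intro j
  obtain ⟨kj, hkj⟩ := hk j
  obtain ⟨k1, hk1⟩ := hk ⟨1, by omega⟩
  have hne : lam ⟨0, by omega⟩ ≠ lam ⟨1, by omega⟩ := by
    intro h
    have := hinj h
    simp [Fin.ext_iff] at this
  have hk1ne : (k1 : ℝ) ≠ 0 := by
    intro h
    apply hne
    have : τ * (lam ⟨0, by omega⟩ - lam ⟨1, by omega⟩) = 0 := by rw [hk1, h, zero_mul]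
    have := mul_eq_zero.mp this
    rcases this with h' | h'
    · exact absurd h' (ne_of_gt hτ)
    · linarith [sub_eq_zero.mp h']
  refine ⟨(kj : ℚ) / (k1 : ℚ), ?_⟩
  have hτne : τ ≠ 0 := ne_of_gt hτ
  push_cast
  rw [div_mul_eq_mul_div, eq_div_iff hk1ne]
  have key : τ * ((lam ⟨0, by omega⟩ - lam j) * k1) = τ * ((kj : ℝ) * (lam ⟨0, by omega⟩ - lam ⟨1, by omega⟩)) := by
    linear_combination (k1 : ℝ) * hkj - (kj : ℝ) * hk1
  have := mul_left_cancel₀ hτne key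
  linarith [this]
end
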